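/- arXiv:2502.02906 — 6 statements merged into one kernel-verified Lean document; each statement's English description precedes it below -/
import Mathlib

section
/- Let X be a locally compact metric space, F a finite family of continuous self-maps of X, and V ⊆ X an open, relatively compact subset such that the closure of V is contained in the union over f ∈ F of f⁻¹(V). Then V satisfies the strong covering condition: there exists δ > 0 such that the δ-neighborhood of V is contained in the union over f ∈ F of the preimages f⁻¹(V_(δ)), where V_(δ) = {v ∈ V : B_δ(v) ⊆ V}. -/
open Metric Set

/-- **Strong covering from covering** (Lemma 3.2 / `lemma covering to strong`):
If `X` is a locally compact metric space, `F = {f i}` a finite family of continuous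
self-maps of `X`, and `V ⊆ X` an open relatively compact set whose closure is covered by
the preimages `f⁻¹(V)`, then `V` satisfies the strong covering condition: there is `δ > 0`
such that the `δ`-neighborhood of `V` is contained in the union of the preimages of the
`δ`-interior `V_(δ) = {v ∈ V | B_δ(v) ⊆ V}`. -/
theorem strong_covering_of_covering {X : Type*} [MetricSpace X] [LocallyCompactSpace X]
    {ι : Type*} [Fintype ι] (f : ι → X → X) (hf : ∀ i, Continuous (f i))
    (V : Set X) (hVopen : IsOpen V) (hVcomp : IsCompact (closure V))
    (hcov : closure V ⊆ ⋃ i, (f i) ⁻¹' V) :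
    ∃ δ > (0 : ℝ), (⋃ v ∈ V, ball v δ) ⊆ ⋃ i, (f i) ⁻¹' {v ∈ V | ball v δ ⊆ V} := by
  rcases V.eq_empty_or_nonempty with hV | hV
  · exact ⟨1, one_pos, by simp [hV]⟩
  have key : ∀ x ∈ closure V, ∃ i, ∃ ε > (0:ℝ), ∃ r > (0:ℝ),
      ball (f i x) (3*ε) ⊆ V ∧ ∀ y ∈ ball x r, f i y ∈ ball (f i x) ε := by
    intro x hx
    rcases mem_iUnion.1 (hcov hx) with ⟨i, hi⟩
    rcases Metric.isOpen_iff.1 hVopen _ hi with ⟨ε', hε', hball⟩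
    refine ⟨i, ε'/3, by linarith, ?_⟩
    rcases Metric.continuousAt_iff.1 ((hf i).continuousAt) (ε'/3) (by linarith)
      with ⟨r, hr, hmap⟩
    refine ⟨r, hr, ?_, ?_⟩
    · intro y hy
      apply hball
      have : (3:ℝ) * (ε'/3) = ε' := by ring
      simpa [this] using hy
    · intro y hy
      exact mem_ball.2 (hmap (mem_ball.1 hy))
  choose i ε hε r hr hV3 hmap using key
  obtain ⟨t, ht⟩ := hVcomp.elim_nhds_subcover' (fun x hx => ball x (r x hx / 2))
    (fun x hx => ball_mem_nhds x (by linarith [hr x hx]))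
  have htne : t.Nonempty := by
    rcases hV with ⟨v, hv⟩
    have hvK : v ∈ closure V := subset_closure hv
    rcases mem_iUnion₂.1 (ht hvK) with ⟨x, hx, _⟩
    exact ⟨x, hx⟩
  set δ := t.inf' htne (fun x => min (r x.1 x.2 / 2) (ε x.1 x.2)) with hδdef
  have hδpos : 0 < δ := by
    rw [hδdef, Finset.lt_inf'_iff]
    intro x _
    exact lt_min (by linarith [hr x.1 x.2]) (hε x.1 x.2)
  refine ⟨δ, hδpos, ?_⟩
  intro y hy
  rcases mem_iUnion₂.1 hy with ⟨v, hv, hyv⟩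
  have hvK : v ∈ closure V := subset_closure hv
  rcases mem_iUnion₂.1 (ht hvK) with ⟨x, hxt, hvx⟩
  have hδle : δ ≤ min (r x.1 x.2 / 2) (ε x.1 x.2) :=
    Finset.inf'_le _ hxt
  have hδr : δ ≤ r x.1 x.2 / 2 := hδle.trans (min_le_left _ _)
  have hδε : δ ≤ ε x.1 x.2 := hδle.trans (min_le_right _ _)
  have hyx : y ∈ ball x.1 (r x.1 x.2) := by
    have h1 : dist y v < δ := mem_ball.1 hyv
    have h2 : dist v x.1 < r x.1 x.2 / 2 := mem_ball.1 hvx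
    have := dist_triangle y v x.1
    exact mem_ball.2 (by linarith)
  have hfy : f (i x.1 x.2) y ∈ ball (f (i x.1 x.2) x.1) (ε x.1 x.2) :=
    hmap x.1 x.2 y hyx
  refine mem_iUnion.2 ⟨i x.1 x.2, ?_, ?_⟩
  · apply hV3 x.1 x.2
    have := mem_ball.1 hfy
    exact mem_ball.2 (by nlinarith [hε x.1 x.2])
  · intro z hz
    apply hV3 x.1 x.2
    have h1 : dist z (f (i x.1 x.2) y) < δ := mem_ball.1 hz
    have h2 : dist (f (i x.1 x.2) y) (f (i x.1 x.2) x.1) < ε x.1 x.2 := mem_ball.1 hfy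
    have := dist_triangle z (f (i x.1 x.2) y) (f (i x.1 x.2) x.1)
    exact mem_ball.2 (by linarith)
end

section
/- Let X be a metric space, F = {f₁,…,f_k} a finite family of continuous self-maps of X, and V ⊆ X a subset satisfying the strong covering condition with respect to F with constant δ > 0. Then there exists ε > 0 such that for any family F̃ = {f̃₁,…,f̃_k} of continuous maps with sup_x d(f_i(x), f̃_i(x)) < ε for all i, the set V still satisfies the strong covering condition with respect to F̃. -/
open Metric Set

/-- **Stability of the strong covering condition** (Lemma 3.3):
If `V` satisfies the strong covering condition with constant `δ` with respect to the
finite family `f₁, …, f_k`, then there is `ε > 0` such that any family `f̃₁, …, f̃_k`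
of continuous maps that is `ε`-close to `f` in the `C⁰` (uniform) sense still makes `V`
satisfy the strong covering condition (for some constant `δ' > 0`). -/
theorem strong_covering_stable {X : Type*} [MetricSpace X] {k : ℕ}
    (f : Fin k → X → X) (hf : ∀ i, Continuous (f i))
    (V : Set X) (δ : ℝ) (hδ : 0 < δ)
    (hcov : (⋃ v ∈ V, ball v δ) ⊆ ⋃ i, (f i) ⁻¹' {v ∈ V | ball v δ ⊆ V}) :
    ∃ ε > (0 : ℝ), ∀ ft : Fin k → X → X, (∀ i, Continuous (ft i)) →
      (∀ i x, dist (f i x) (ft i x) < ε) →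
      ∃ δ' > (0 : ℝ),
        (⋃ v ∈ V, ball v δ') ⊆ ⋃ i, (ft i) ⁻¹' {v ∈ V | ball v δ' ⊆ V} := by
  refine ⟨δ/2, by linarith, fun ft hft hclose => ⟨δ/2, by linarith, fun x hx => ?_⟩⟩
  simp only [mem_iUnion, mem_ball] at hx
  obtain ⟨v, hv, hxv⟩ := hx
  have hx' : x ∈ ⋃ v ∈ V, ball v δ := by
    simp only [mem_iUnion, mem_ball]
    exact ⟨v, hv, by linarith⟩
  obtain ⟨i, hi⟩ := mem_iUnion.mp (hcov hx')
  obtain ⟨hiV, hiball⟩ := hi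
  refine mem_iUnion.mpr ⟨i, ?_, ?_⟩
  · refine hiball ?_
    simp only [mem_ball, dist_comm (ft i x)]
    have := hclose i x; linarith
  · intro y hy
    apply hiball
    simp only [mem_ball] at hy ⊢
    have := hclose i x
    calc dist y (f i x) ≤ dist y (ft i x) + dist (ft i x) (f i x) := dist_triangle _ _ _
      _ < δ/2 + δ/2 := by rw [dist_comm (ft i x)]; linarith
      _ = δ := by ring
end

section
/- Let ρ, C > 0, μ′, μ, α ∈ (0,1), κ ≥ 1 with κ·μ^α < 1. Let {f_i} be a sequence of C^{1+α} diffeomorphisms from B_ρ(0) ⊂ ℝ^d onto their images, each fixing 0, with ‖f_i‖_{C^{1+α}} < C, with μ′ < ‖Df_i(y)‖_op < μ for all y ∈ B_ρ(0), and with ‖Df_i(0)‖_op·‖(Df_i(0))⁻¹‖_op ≤ κ for all i. Then the sequence F_n := (Df^n(0))⁻¹ ∘ f^n, where f^n := f_n ∘ ⋯ ∘ f_1, converges in the C^{1+α} topology on B_ρ(0), and there exists a constant C₈ (depending only on ρ, C, μ, μ′, α, κ, d) such that ‖F_{n} − F_{n-1}‖_{C^{1+α}} ≤ C₈·(κ·μ^α)^n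 for all n. -/
open Metric Set Filter Topology

noncomputable section

variable {d : ℕ}

/-- `comps f n = f n ∘ ⋯ ∘ f 1` (and `comps f 0 = id`). -/
def comps (f : ℕ → EuclideanSpace ℝ (Fin d) → EuclideanSpace ℝ (Fin d)) :
    ℕ → EuclideanSpace ℝ (Fin d) → EuclideanSpace ℝ (Fin d)
  | 0 => id
  | n + 1 => f (n + 1) ∘ comps f n

/-- `Lcomp A n = A n ∘ ⋯ ∘ A 1` as continuous linear equivalences. -/
def Lcomp (A : ℕ → EuclideanSpace ℝ (Fin d) ≃L[ℝ] EuclideanSpace ℝ (Fin d)) :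
    ℕ → EuclideanSpace ℝ (Fin d) ≃L[ℝ] EuclideanSpace ℝ (Fin d)
  | 0 => ContinuousLinearEquiv.refl ℝ (EuclideanSpace ℝ (Fin d))
  | n + 1 => (Lcomp A n).trans (A (n + 1))

/-- The `C^{1+α}` distance of `F` and `G` on `s` is at most `c`: `C⁰` distance, `C¹`
distance and `α`-Hölder seminorm of the difference of the derivatives are all `≤ c`. -/
def C1aDistLE (α : ℝ) (s : Set (EuclideanSpace ℝ (Fin d)))
    (F G : EuclideanSpace ℝ (Fin d) → EuclideanSpace ℝ (Fin d)) (c : ℝ) : Prop :=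
  (∀ x ∈ s, ‖F x - G x‖ ≤ c) ∧
  (∀ x ∈ s, ‖fderiv ℝ F x - fderiv ℝ G x‖ ≤ c) ∧
  (∀ x ∈ s, ∀ y ∈ s,
    ‖(fderiv ℝ F x - fderiv ℝ G x) - (fderiv ℝ F y - fderiv ℝ G y)‖ ≤ c * ‖x - y‖ ^ α)

local notation "Ei" => EuclideanSpace ℝ (Fin d)

lemma geomsum_le (q : ℝ) (h0 : 0 ≤ q) (h1 : q < 1) (m : ℕ) :
    ∑ j ∈ Finset.range m, q ^ j ≤ 1 / (1 - q) := by
  have hq : (0:ℝ) < 1 - q := by linarith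
  have e : ∑ j ∈ Finset.range m, q ^ j = (1 - q ^ m) / (1 - q) := by
    rw [geom_sum_eq h1.ne m, ← neg_div_neg_eq]; ring_nf
  rw [e]
  have : 0 ≤ q ^ m := pow_nonneg h0 m
  gcongr
  linarith
lemma prod_one_add_le (s : Finset ℕ) (g : ℕ → ℝ) (h : ∀ i ∈ s, 0 ≤ g i) :
    ∏ i ∈ s, (1 + g i) ≤ Real.exp (∑ i ∈ s, g i) := by
  rw [Real.exp_sum]
  apply Finset.prod_le_prod
  · intro i hi; linarith [h i hi]
  · intro i hi; rw [add_comm]; exact Real.add_one_le_exp (g i)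
lemma pow_rpow_comm (x : ℝ) (hx : 0 ≤ x) (α : ℝ) (m : ℕ) : (x ^ m) ^ α = (x ^ α) ^ m := by
  rw [← Real.rpow_natCast x m, ← Real.rpow_natCast (x ^ α) m, ← Real.rpow_mul hx,
    ← Real.rpow_mul hx, mul_comm]

/-- Bundle of data and hypotheses for the convergence-of-geometries theorem. -/
structure CG (d : ℕ) where
  ρ : ℝ
  C : ℝ
  μ' : ℝ
  μ : ℝ
  α : ℝ
  κ : ℝ
  f : ℕ → EuclideanSpace ℝ (Fin d) → EuclideanSpace ℝ (Fin d)
  A : ℕ → EuclideanSpace ℝ (Fin d) ≃L[ℝ] EuclideanSpace ℝ (Fin d)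
  hρ : 0 < ρ
  hC : 0 < C
  hμ'0 : 0 < μ'
  hμ'μ : μ' < μ
  hμ1 : μ < 1
  hα0 : 0 < α
  hα1 : α < 1
  hκ1 : 1 ≤ κ
  hbunch : κ * μ ^ α < 1
  h0fix : ∀ i, 1 ≤ i → f i 0 = 0
  h0diff : ∀ i, 1 ≤ i → ∀ x ∈ ball (0 : EuclideanSpace ℝ (Fin d)) ρ,
      DifferentiableAt ℝ (f i) x
  h1Hol : ∀ i, 1 ≤ i → ∀ x ∈ ball (0 : EuclideanSpace ℝ (Fin d)) ρ,
      ∀ y ∈ ball (0 : EuclideanSpace ℝ (Fin d)) ρ,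
        ‖fderiv ℝ (f i) x - fderiv ℝ (f i) y‖ ≤ C * ‖x - y‖ ^ α
  h2 : ∀ i, 1 ≤ i → ∀ y ∈ ball (0 : EuclideanSpace ℝ (Fin d)) ρ,
      μ' < ‖fderiv ℝ (f i) y‖ ∧ ‖fderiv ℝ (f i) y‖ < μ
  hA : ∀ i, 1 ≤ i → fderiv ℝ (f i) 0 =
      (A i : EuclideanSpace ℝ (Fin d) →L[ℝ] EuclideanSpace ℝ (Fin d))
  h3 : ∀ i, 1 ≤ i →
      ‖(A i : EuclideanSpace ℝ (Fin d) →L[ℝ] EuclideanSpace ℝ (Fin d))‖ *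
        ‖((A i).symm : EuclideanSpace ℝ (Fin d) →L[ℝ] EuclideanSpace ℝ (Fin d))‖ ≤ κ

namespace CG

variable (S : CG d)

def dom : Set Ei := ball 0 S.ρ
def q : ℝ := S.μ ^ S.α
def cc : ℝ := S.C * S.ρ ^ S.α / S.μ'
def Kc : ℝ := Real.exp (S.cc / (1 - S.q))
def P (m : ℕ) : ℝ := ∏ i ∈ Finset.Icc 1 m, ‖(S.A i : Ei →L[ℝ] Ei)‖
def Rr (m : ℕ) : ℝ := ∏ i ∈ Finset.Icc 1 m, ‖((S.A i).symm : Ei →L[ℝ] Ei)‖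
def W (m : ℕ) : ℝ := ∏ i ∈ Finset.Icc 1 m, (1 + S.cc * S.q ^ (i - 1))
def Hb : ℕ → ℝ
  | 0 => 0
  | m + 1 => S.C * S.q ^ m * (S.P m * S.W m) +
      (‖(S.A (m+1) : Ei →L[ℝ] Ei)‖ * (1 + S.cc * S.q ^ m)) * Hb m

lemma hμ0 : 0 < S.μ := S.hμ'0.trans S.hμ'μ
lemma hq0 : 0 < S.q := Real.rpow_pos_of_pos S.hμ0 _
lemma hq1 : S.q < 1 := Real.rpow_lt_one S.hμ0.le S.hμ1 S.hα0
lemma hr0 : 0 < S.κ * S.q := mul_pos (lt_of_lt_of_le one_pos S.hκ1) S.hq0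
lemma hr1 : S.κ * S.q < 1 := S.hbunch
lemma hcc0 : 0 < S.cc :=
  div_pos (mul_pos S.hC (Real.rpow_pos_of_pos S.hρ _)) S.hμ'0
lemma hKc1 : 1 ≤ S.Kc := by
  have : 0 ≤ S.cc / (1 - S.q) :=
    div_nonneg S.hcc0.le (by linarith [S.hq1])
  calc (1:ℝ) = Real.exp 0 := Real.exp_zero.symm
  _ ≤ _ := Real.exp_le_exp.2 this
lemma zero_mem : (0 : Ei) ∈ S.dom := mem_ball_self S.hρ

lemma normA_gt (i : ℕ) (hi : 1 ≤ i) : S.μ' < ‖(S.A i : Ei →L[ℝ] Ei)‖ := by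
  have := (S.h2 i hi 0 S.zero_mem).1
  rwa [S.hA i hi] at this
lemma normA_lt (i : ℕ) (hi : 1 ≤ i) : ‖(S.A i : Ei →L[ℝ] Ei)‖ < S.μ := by
  have := (S.h2 i hi 0 S.zero_mem).2
  rwa [S.hA i hi] at this
lemma normAinv_le (i : ℕ) (hi : 1 ≤ i) :
    ‖((S.A i).symm : Ei →L[ℝ] Ei)‖ ≤ S.κ / S.μ' := by
  have h3 := S.h3 i hi
  have hA := S.normA_gt i hi
  have hpos : (0:ℝ) < ‖(S.A i : Ei →L[ℝ] Ei)‖ := S.hμ'0.trans hA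
  rw [div_eq_mul_inv, ← mul_one ‖((S.A i).symm : Ei →L[ℝ] Ei)‖]
  calc ‖((S.A i).symm : Ei →L[ℝ] Ei)‖ * 1
      ≤ (S.κ / ‖(S.A i : Ei →L[ℝ] Ei)‖) := by
        rw [mul_one, le_div_iff₀ hpos, mul_comm]; exact h3
    _ ≤ S.κ * S.μ'⁻¹ := by
        rw [div_eq_mul_inv]
        have h1 : (0:ℝ) ≤ S.κ := le_trans zero_le_one S.hκ1
        exact mul_le_mul_of_nonneg_left (by
          apply inv_anti₀ S.hμ'0 hA.le) h1


lemma P_pos (m : ℕ) : 0 < S.P m := by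
  apply Finset.prod_pos
  intro i hi
  exact S.hμ'0.trans (S.normA_gt i (Finset.mem_Icc.1 hi).1)
lemma P_nonneg (m : ℕ) : 0 ≤ S.P m := (S.P_pos m).le
lemma Rr_nonneg (m : ℕ) : 0 ≤ S.Rr m :=
  Finset.prod_nonneg fun i _ => norm_nonneg _
lemma W_one_le (m : ℕ) : 1 ≤ S.W m := by
  rw [W]
  calc (1:ℝ) = ∏ _i ∈ Finset.Icc 1 m, (1:ℝ) := by simp
  _ ≤ _ := by
    apply Finset.prod_le_prod
    · intro i _; norm_num
    · intro i _
      have : 0 ≤ S.cc * S.q ^ (i-1) := mul_nonneg S.hcc0.le (pow_nonneg S.hq0.le _)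
      linarith
lemma W_nonneg (m : ℕ) : 0 ≤ S.W m := le_trans zero_le_one (S.W_one_le m)
lemma W_le_Kc (m : ℕ) : S.W m ≤ S.Kc := by
  refine le_trans (prod_one_add_le _ _ fun i _ =>
    mul_nonneg S.hcc0.le (pow_nonneg S.hq0.le _)) ?_
  rw [Kc, Real.exp_le_exp]
  have : ∑ i ∈ Finset.Icc 1 m, S.cc * S.q ^ (i-1)
      = S.cc * ∑ j ∈ Finset.range m, S.q ^ j := by
    rw [Finset.mul_sum]
    refine Finset.sum_nbij' (fun i => i - 1) (fun j => j + 1) ?_ ?_ ?_ ?_ ?_ <;>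
      (intro i hi; simp only [Finset.mem_Icc, Finset.mem_range] at *) <;> omega
  rw [this, div_eq_mul_inv]
  have h1q : (0:ℝ) < 1 - S.q := by linarith [S.hq1]
  have := geomsum_le S.q S.hq0.le S.hq1 m
  calc S.cc * ∑ j ∈ Finset.range m, S.q ^ j ≤ S.cc * (1/(1-S.q)) := by
        exact mul_le_mul_of_nonneg_left this S.hcc0.le
    _ = S.cc * (1 - S.q)⁻¹ := by rw [one_div]
lemma RP_le (m : ℕ) : S.Rr m * S.P m ≤ S.κ ^ m := by
  rw [Rr, P, ← Finset.prod_mul_distrib]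
  calc ∏ i ∈ Finset.Icc 1 m, (‖((S.A i).symm : Ei →L[ℝ] Ei)‖ * ‖(S.A i : Ei →L[ℝ] Ei)‖)
      ≤ ∏ _i ∈ Finset.Icc 1 m, S.κ := by
        apply Finset.prod_le_prod
        · intro i _; positivity
        · intro i hi
          rw [mul_comm]; exact S.h3 i (Finset.mem_Icc.1 hi).1
    _ = S.κ ^ m := by rw [Finset.prod_const, Nat.card_Icc]; norm_num
lemma RPW_le (m : ℕ) : S.Rr m * (S.P m * S.W m) ≤ S.κ ^ m * S.Kc := by
  rw [← mul_assoc]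
  exact mul_le_mul (S.RP_le m) (S.W_le_Kc m) (S.W_nonneg m)
    (pow_nonneg (le_trans zero_le_one S.hκ1) m)
lemma norm_Lcomp_symm_le (m : ℕ) :
    ‖((Lcomp S.A m).symm : Ei →L[ℝ] Ei)‖ ≤ S.Rr m := by
  induction m with
  | zero =>
      have h : ((Lcomp S.A 0).symm : Ei →L[ℝ] Ei) = ContinuousLinearMap.id ℝ Ei := rfl
      rw [h, Rr, Finset.Icc_eq_empty (by omega), Finset.prod_empty]
      exact ContinuousLinearMap.norm_id_le
  | succ n ih =>
      have heq : ((Lcomp S.A (n+1)).symm : Ei →L[ℝ] Ei)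
          = ((Lcomp S.A n).symm : Ei →L[ℝ] Ei).comp
            (((S.A (n+1)).symm : Ei →L[ℝ] Ei)) := by
        ext v
        simp [Lcomp]
      rw [heq, Rr, Finset.prod_Icc_succ_top (by omega)]
      calc ‖((Lcomp S.A n).symm : Ei →L[ℝ] Ei).comp (((S.A (n+1)).symm : Ei →L[ℝ] Ei))‖
          ≤ ‖((Lcomp S.A n).symm : Ei →L[ℝ] Ei)‖ * ‖(((S.A (n+1)).symm : Ei →L[ℝ] Ei))‖ :=
            ContinuousLinearMap.opNorm_comp_le _ _
        _ ≤ _ := by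
            apply mul_le_mul_of_nonneg_right _ (norm_nonneg _)
            rw [← Rr]; exact ih

lemma norm_le_sub_add {V : Type*} [NormedAddCommGroup V] (a b : V) :
    ‖a‖ ≤ ‖a - b‖ + ‖b‖ := by
  simpa using norm_add_le (a - b) b

lemma one_add_ccq_nonneg (n : ℕ) : (0:ℝ) ≤ 1 + S.cc * S.q ^ n := by
  have := mul_nonneg S.hcc0.le (pow_nonneg S.hq0.le n)
  linarith

lemma dom_convex : Convex ℝ S.dom := convex_ball 0 S.ρ

lemma mem_dom_iff {x : Ei} : x ∈ S.dom ↔ ‖x‖ < S.ρ := mem_ball_zero_iff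

lemma lip (i : ℕ) (hi : 1 ≤ i) {x y : Ei} (hx : x ∈ S.dom) (hy : y ∈ S.dom) :
    ‖S.f i x - S.f i y‖ ≤ S.μ * ‖x - y‖ :=
  Convex.norm_image_sub_le_of_norm_fderiv_le (fun z hz => S.h0diff i hi z hz)
    (fun z hz => (S.h2 i hi z hz).2.le) S.dom_convex hy hx

lemma taylor (i : ℕ) (hi : 1 ≤ i) {y : Ei} (hy : y ∈ S.dom) :
    ‖S.f i y - S.A i y‖ ≤ S.C * ‖y‖ ^ S.α * ‖y‖ := by
  have hyρ : ‖y‖ < S.ρ := S.mem_dom_iff.1 hy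
  have hsub : closedBall (0:Ei) ‖y‖ ⊆ S.dom := closedBall_subset_ball hyρ
  have key := Convex.norm_image_sub_le_of_norm_fderiv_le'
    (f := S.f i) (φ := (S.A i : Ei →L[ℝ] Ei)) (C := S.C * ‖y‖ ^ S.α)
    (fun z hz => S.h0diff i hi z (hsub hz))
    (fun z hz => by
      rw [← S.hA i hi]
      have hz' : z ∈ S.dom := hsub hz
      refine (S.h1Hol i hi z hz' 0 S.zero_mem).trans ?_
      have h1 : ‖z - 0‖ ≤ ‖y‖ := by simpa using mem_closedBall_zero_iff.1 hz
      have := Real.rpow_le_rpow (norm_nonneg _) h1 S.hα0.le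
      exact mul_le_mul_of_nonneg_left this S.hC.le)
    (convex_closedBall 0 ‖y‖) (mem_closedBall_self (norm_nonneg y))
    (mem_closedBall_zero_iff.2 le_rfl)
  simpa [S.h0fix i hi] using key

lemma df_sub_A (i : ℕ) (hi : 1 ≤ i) {y : Ei} (hy : y ∈ S.dom) :
    ‖fderiv ℝ (S.f i) y - (S.A i : Ei →L[ℝ] Ei)‖ ≤ S.C * ‖y‖ ^ S.α := by
  rw [← S.hA i hi]
  have h := S.h1Hol i hi y hy 0 S.zero_mem
  rwa [sub_zero] at h

lemma df_bound (i : ℕ) (hi : 1 ≤ i) {y : Ei} (hy : y ∈ S.dom) :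
    ‖fderiv ℝ (S.f i) y‖ ≤ ‖(S.A i : Ei →L[ℝ] Ei)‖ + S.C * ‖y‖ ^ S.α := by
  have := S.df_sub_A i hi hy
  calc ‖fderiv ℝ (S.f i) y‖
      ≤ ‖fderiv ℝ (S.f i) y - (S.A i : Ei →L[ℝ] Ei)‖ + ‖(S.A i : Ei →L[ℝ] Ei)‖ :=
        norm_le_sub_add _ _
    _ ≤ _ := by linarith

lemma normf_le (i : ℕ) (hi : 1 ≤ i) {y : Ei} (hy : y ∈ S.dom) :
    ‖S.f i y‖ ≤ (‖(S.A i : Ei →L[ℝ] Ei)‖ + S.C * ‖y‖ ^ S.α) * ‖y‖ := by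
  have h1 := S.taylor i hi hy
  calc ‖S.f i y‖ ≤ ‖S.f i y - S.A i y‖ + ‖S.A i y‖ := norm_le_sub_add _ _
    _ ≤ S.C * ‖y‖ ^ S.α * ‖y‖ + ‖(S.A i : Ei →L[ℝ] Ei)‖ * ‖y‖ := by
        have := (S.A i : Ei →L[ℝ] Ei).le_opNorm y
        exact add_le_add h1 this
    _ = _ := by ring

lemma comps_norm_le (m : ℕ) : ∀ x ∈ S.dom, ‖comps S.f m x‖ ≤ S.μ ^ m * ‖x‖ := by
  induction m with
  | zero => intro x _; simp [comps]
  | succ n ih =>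
      intro x hx
      have h1 := ih x hx
      have hmem : comps S.f n x ∈ S.dom := by
        rw [mem_dom_iff]
        have hμ1 : S.μ ^ n ≤ 1 := pow_le_one₀ S.hμ0.le S.hμ1.le
        have hxρ : ‖x‖ < S.ρ := S.mem_dom_iff.1 hx
        nlinarith [norm_nonneg x, norm_nonneg (comps S.f n x)]
      have h2 : ‖S.f (n+1) (comps S.f n x) - S.f (n+1) 0‖ ≤ S.μ * ‖comps S.f n x - 0‖ :=
        S.lip (n+1) (by omega) hmem S.zero_mem
      rw [S.h0fix (n+1) (by omega), sub_zero, sub_zero] at h2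
      have : ‖comps S.f (n+1) x‖ = ‖S.f (n+1) (comps S.f n x)‖ := rfl
      rw [this, pow_succ]
      calc ‖S.f (n+1) (comps S.f n x)‖ ≤ S.μ * ‖comps S.f n x‖ := h2
        _ ≤ S.μ * (S.μ ^ n * ‖x‖) := by
            exact mul_le_mul_of_nonneg_left h1 S.hμ0.le
        _ = S.μ ^ n * S.μ * ‖x‖ := by ring

lemma comps_mem (m : ℕ) {x : Ei} (hx : x ∈ S.dom) : comps S.f m x ∈ S.dom := by
  rw [mem_dom_iff]
  have h1 := S.comps_norm_le m x hx
  have hμ1 : S.μ ^ m ≤ 1 := pow_le_one₀ S.hμ0.le S.hμ1.le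
  have hxρ : ‖x‖ < S.ρ := S.mem_dom_iff.1 hx
  nlinarith [norm_nonneg x, norm_nonneg (comps S.f m x)]

lemma comps_lip (m : ℕ) : ∀ x ∈ S.dom, ∀ y ∈ S.dom,
    ‖comps S.f m x - comps S.f m y‖ ≤ S.μ ^ m * ‖x - y‖ := by
  induction m with
  | zero => intro x _ y _; simp [comps]
  | succ n ih =>
      intro x hx y hy
      have h2 : ‖S.f (n+1) (comps S.f n x) - S.f (n+1) (comps S.f n y)‖
          ≤ S.μ * ‖comps S.f n x - comps S.f n y‖ :=
        S.lip (n+1) (by omega) (S.comps_mem n hx) (S.comps_mem n hy)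
      have : ‖comps S.f (n+1) x - comps S.f (n+1) y‖
          = ‖S.f (n+1) (comps S.f n x) - S.f (n+1) (comps S.f n y)‖ := rfl
      rw [this, pow_succ]
      calc ‖S.f (n+1) (comps S.f n x) - S.f (n+1) (comps S.f n y)‖
          ≤ S.μ * ‖comps S.f n x - comps S.f n y‖ := h2
        _ ≤ S.μ * (S.μ ^ n * ‖x - y‖) :=
            mul_le_mul_of_nonneg_left (ih x hx y hy) S.hμ0.le
        _ = S.μ ^ n * S.μ * ‖x - y‖ := by ring

lemma comps_diff (m : ℕ) {x : Ei} (hx : x ∈ S.dom) :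
    DifferentiableAt ℝ (comps S.f m) x := by
  induction m with
  | zero => exact differentiableAt_id
  | succ n ih =>
      exact DifferentiableAt.comp x
        (S.h0diff (n+1) (by omega) _ (S.comps_mem n hx)) ih

lemma comps_fderiv_succ (m : ℕ) {x : Ei} (hx : x ∈ S.dom) :
    fderiv ℝ (comps S.f (m+1)) x
      = (fderiv ℝ (S.f (m+1)) (comps S.f m x)).comp (fderiv ℝ (comps S.f m) x) :=
  fderiv_comp x (S.h0diff (m+1) (by omega) _ (S.comps_mem m hx)) (S.comps_diff m hx)

lemma norm_comps_rpow (m : ℕ) {x : Ei} (hx : x ∈ S.dom) :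
    ‖comps S.f m x‖ ^ S.α ≤ S.q ^ m * S.ρ ^ S.α := by
  have h1 : ‖comps S.f m x‖ ≤ S.μ ^ m * S.ρ := by
    have := S.comps_norm_le m x hx
    have hxρ : ‖x‖ < S.ρ := S.mem_dom_iff.1 hx
    nlinarith [pow_nonneg S.hμ0.le m, norm_nonneg x]
  calc ‖comps S.f m x‖ ^ S.α ≤ (S.μ ^ m * S.ρ) ^ S.α :=
        Real.rpow_le_rpow (norm_nonneg _) h1 S.hα0.le
    _ = (S.μ ^ m) ^ S.α * S.ρ ^ S.α :=
        Real.mul_rpow (pow_nonneg S.hμ0.le m) S.hρ.le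
    _ = S.q ^ m * S.ρ ^ S.α := by rw [pow_rpow_comm _ S.hμ0.le]; rfl

lemma df_bound' (m : ℕ) {x : Ei} (hx : x ∈ S.dom) :
    ‖fderiv ℝ (S.f (m+1)) (comps S.f m x)‖
      ≤ ‖(S.A (m+1) : Ei →L[ℝ] Ei)‖ * (1 + S.cc * S.q ^ m) := by
  have h1 := S.df_bound (m+1) (by omega) (S.comps_mem m hx)
  have h2 := S.norm_comps_rpow m hx
  have h3 : S.C * ‖comps S.f m x‖ ^ S.α ≤ S.cc * S.μ' * S.q ^ m := by
    have : S.cc * S.μ' = S.C * S.ρ ^ S.α := by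
      rw [cc, div_mul_eq_mul_div, mul_div_assoc, div_self S.hμ'0.ne', mul_one]
    rw [this]
    calc S.C * ‖comps S.f m x‖ ^ S.α ≤ S.C * (S.q ^ m * S.ρ ^ S.α) :=
          mul_le_mul_of_nonneg_left h2 S.hC.le
      _ = S.C * S.ρ ^ S.α * S.q ^ m := by ring
  have h4 : S.μ' ≤ ‖(S.A (m+1) : Ei →L[ℝ] Ei)‖ := (S.normA_gt (m+1) (by omega)).le
  have h5 : S.cc * S.μ' * S.q ^ m ≤ S.cc * ‖(S.A (m+1) : Ei →L[ℝ] Ei)‖ * S.q ^ m := by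
    have := mul_nonneg S.hcc0.le (pow_nonneg S.hq0.le m)
    nlinarith [pow_nonneg S.hq0.le m, S.hcc0.le]
  calc ‖fderiv ℝ (S.f (m+1)) (comps S.f m x)‖
      ≤ ‖(S.A (m+1) : Ei →L[ℝ] Ei)‖ + S.C * ‖comps S.f m x‖ ^ S.α := h1
    _ ≤ ‖(S.A (m+1) : Ei →L[ℝ] Ei)‖ + S.cc * ‖(S.A (m+1) : Ei →L[ℝ] Ei)‖ * S.q ^ m := by
        linarith
    _ = _ := by ring

lemma comps_fderiv_norm_le (m : ℕ) : ∀ x ∈ S.dom,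
    ‖fderiv ℝ (comps S.f m) x‖ ≤ S.P m * S.W m := by
  induction m with
  | zero =>
      intro x _
      have : fderiv ℝ (comps S.f 0) x = ContinuousLinearMap.id ℝ Ei := fderiv_id'
      rw [this, P, W, Finset.Icc_eq_empty (by omega), Finset.prod_empty, Finset.prod_empty,
        mul_one]
      exact ContinuousLinearMap.norm_id_le
  | succ n ih =>
      intro x hx
      rw [S.comps_fderiv_succ n hx]
      have hP : S.P (n+1) = S.P n * ‖(S.A (n+1) : Ei →L[ℝ] Ei)‖ := by
        rw [P, P, Finset.prod_Icc_succ_top (by omega)]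
      have hW : S.W (n+1) = S.W n * (1 + S.cc * S.q ^ n) := by
        rw [W, W, Finset.prod_Icc_succ_top (by omega)]
        norm_num
      calc ‖(fderiv ℝ (S.f (n+1)) (comps S.f n x)).comp (fderiv ℝ (comps S.f n) x)‖
          ≤ ‖fderiv ℝ (S.f (n+1)) (comps S.f n x)‖ * ‖fderiv ℝ (comps S.f n) x‖ :=
            ContinuousLinearMap.opNorm_comp_le _ _
        _ ≤ (‖(S.A (n+1) : Ei →L[ℝ] Ei)‖ * (1 + S.cc * S.q ^ n)) * (S.P n * S.W n) := by
            apply mul_le_mul (S.df_bound' n hx) (ih x hx) (norm_nonneg _)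
            exact mul_nonneg (norm_nonneg _) (S.one_add_ccq_nonneg n)
        _ = S.P (n+1) * S.W (n+1) := by rw [hP, hW]; ring

lemma comps_norm_le' (m : ℕ) : ∀ x ∈ S.dom, ‖comps S.f m x‖ ≤ S.P m * S.W m * ‖x‖ := by
  induction m with
  | zero =>
      intro x _
      rw [P, W, Finset.Icc_eq_empty (by omega), Finset.prod_empty, Finset.prod_empty]
      simp [comps]
  | succ n ih =>
      intro x hx
      have hmem := S.comps_mem n hx
      have h1 := S.normf_le (n+1) (by omega) hmem
      have h2 : ‖S.f (n+1) (comps S.f n x)‖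
          ≤ (‖(S.A (n+1) : Ei →L[ℝ] Ei)‖ * (1 + S.cc * S.q ^ n)) * ‖comps S.f n x‖ := by
        refine h1.trans (mul_le_mul_of_nonneg_right ?_ (norm_nonneg _))
        -- same bound as df_bound' but for the coefficient
        have h2 := S.norm_comps_rpow n hx
        have h3 : S.C * ‖comps S.f n x‖ ^ S.α ≤ S.cc * S.μ' * S.q ^ n := by
          have e : S.cc * S.μ' = S.C * S.ρ ^ S.α := by
            rw [cc, div_mul_eq_mul_div, mul_div_assoc, div_self S.hμ'0.ne', mul_one]
          rw [e]
          calc S.C * ‖comps S.f n x‖ ^ S.α ≤ S.C * (S.q ^ n * S.ρ ^ S.α) :=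
                mul_le_mul_of_nonneg_left h2 S.hC.le
            _ = S.C * S.ρ ^ S.α * S.q ^ n := by ring
        have h4 : S.μ' ≤ ‖(S.A (n+1) : Ei →L[ℝ] Ei)‖ := (S.normA_gt (n+1) (by omega)).le
        have h6 : S.cc * S.μ' * S.q ^ n ≤ S.cc * ‖(S.A (n+1) : Ei →L[ℝ] Ei)‖ * S.q ^ n := by
          nlinarith [mul_nonneg S.hcc0.le (pow_nonneg S.hq0.le n)]
        calc ‖(S.A (n+1) : Ei →L[ℝ] Ei)‖ + S.C * ‖comps S.f n x‖ ^ S.α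
            ≤ ‖(S.A (n+1) : Ei →L[ℝ] Ei)‖ + S.cc * ‖(S.A (n+1) : Ei →L[ℝ] Ei)‖ * S.q ^ n := by
              linarith
          _ = _ := by ring
      have hP : S.P (n+1) = S.P n * ‖(S.A (n+1) : Ei →L[ℝ] Ei)‖ := by
        rw [P, P, Finset.prod_Icc_succ_top (by omega)]
      have hW : S.W (n+1) = S.W n * (1 + S.cc * S.q ^ n) := by
        rw [W, W, Finset.prod_Icc_succ_top (by omega)]
        norm_num
      have : ‖comps S.f (n+1) x‖ = ‖S.f (n+1) (comps S.f n x)‖ := rfl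
      rw [this, hP, hW]
      calc ‖S.f (n+1) (comps S.f n x)‖
          ≤ (‖(S.A (n+1) : Ei →L[ℝ] Ei)‖ * (1 + S.cc * S.q ^ n)) * ‖comps S.f n x‖ := h2
        _ ≤ (‖(S.A (n+1) : Ei →L[ℝ] Ei)‖ * (1 + S.cc * S.q ^ n)) * (S.P n * S.W n * ‖x‖) := by
            apply mul_le_mul_of_nonneg_left (ih x hx)
            exact mul_nonneg (norm_nonneg _) (S.one_add_ccq_nonneg n)
        _ = _ := by ring

lemma Hb_nonneg (m : ℕ) : 0 ≤ S.Hb m := by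
  induction m with
  | zero => simp [Hb]
  | succ n ih =>
      rw [Hb]
      have h1 : 0 ≤ S.C * S.q ^ n * (S.P n * S.W n) :=
        mul_nonneg (mul_nonneg S.hC.le (pow_nonneg S.hq0.le n))
          (mul_nonneg (S.P_nonneg n) (S.W_nonneg n))
      have h2 : 0 ≤ ‖(S.A (n+1) : Ei →L[ℝ] Ei)‖ * (1 + S.cc * S.q ^ n) :=
        mul_nonneg (norm_nonneg _) (S.one_add_ccq_nonneg n)
      nlinarith

lemma comps_fderiv_hol (m : ℕ) : ∀ x ∈ S.dom, ∀ y ∈ S.dom,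
    ‖fderiv ℝ (comps S.f m) x - fderiv ℝ (comps S.f m) y‖ ≤ S.Hb m * ‖x - y‖ ^ S.α := by
  induction m with
  | zero =>
      intro x _ y _
      have hx : fderiv ℝ (comps S.f 0) x = ContinuousLinearMap.id ℝ Ei := fderiv_id'
      have hy : fderiv ℝ (comps S.f 0) y = ContinuousLinearMap.id ℝ Ei := fderiv_id'
      rw [hx, hy, sub_self, norm_zero, Hb, zero_mul]
  | succ n ih =>
      intro x hx y hy
      rw [S.comps_fderiv_succ n hx, S.comps_fderiv_succ n hy]
      set B1 := fderiv ℝ (S.f (n+1)) (comps S.f n x)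
      set B2 := fderiv ℝ (S.f (n+1)) (comps S.f n y)
      set D1 := fderiv ℝ (comps S.f n) x
      set D2 := fderiv ℝ (comps S.f n) y
      have key : B1.comp D1 - B2.comp D2 = (B1 - B2).comp D1 + B2.comp (D1 - D2) := by
        rw [ContinuousLinearMap.sub_comp, ContinuousLinearMap.comp_sub]
        abel
      rw [key]
      have hB12 : ‖B1 - B2‖ ≤ S.C * S.q ^ n * ‖x - y‖ ^ S.α := by
        have h := S.h1Hol (n+1) (by omega) _ (S.comps_mem n hx) _ (S.comps_mem n hy)
        refine h.trans ?_
        have h2 : ‖comps S.f n x - comps S.f n y‖ ≤ S.μ ^ n * ‖x - y‖ :=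
          S.comps_lip n x hx y hy
        have h3 : ‖comps S.f n x - comps S.f n y‖ ^ S.α ≤ (S.μ ^ n * ‖x - y‖) ^ S.α :=
          Real.rpow_le_rpow (norm_nonneg _) h2 S.hα0.le
        have h4 : (S.μ ^ n * ‖x - y‖) ^ S.α = S.q ^ n * ‖x - y‖ ^ S.α := by
          rw [Real.mul_rpow (pow_nonneg S.hμ0.le n) (norm_nonneg _),
            pow_rpow_comm _ S.hμ0.le]
          rfl
        rw [mul_assoc]
        apply mul_le_mul_of_nonneg_left _ S.hC.le
        rw [← h4]; exact h3
      have hD1 : ‖D1‖ ≤ S.P n * S.W n := S.comps_fderiv_norm_le n x hx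
      have hB2 : ‖B2‖ ≤ ‖(S.A (n+1) : Ei →L[ℝ] Ei)‖ * (1 + S.cc * S.q ^ n) :=
        S.df_bound' n hy
      have hD12 : ‖D1 - D2‖ ≤ S.Hb n * ‖x - y‖ ^ S.α := ih x hx y hy
      have hrp : (0:ℝ) ≤ ‖x - y‖ ^ S.α := Real.rpow_nonneg (norm_nonneg _) _
      calc ‖(B1 - B2).comp D1 + B2.comp (D1 - D2)‖
          ≤ ‖(B1 - B2).comp D1‖ + ‖B2.comp (D1 - D2)‖ := norm_add_le _ _
        _ ≤ ‖B1 - B2‖ * ‖D1‖ + ‖B2‖ * ‖D1 - D2‖ :=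
            add_le_add (ContinuousLinearMap.opNorm_comp_le _ _)
              (ContinuousLinearMap.opNorm_comp_le _ _)
        _ ≤ (S.C * S.q ^ n * ‖x - y‖ ^ S.α) * (S.P n * S.W n)
              + (‖(S.A (n+1) : Ei →L[ℝ] Ei)‖ * (1 + S.cc * S.q ^ n))
                  * (S.Hb n * ‖x - y‖ ^ S.α) := by
            apply add_le_add
            · exact mul_le_mul hB12 hD1 (norm_nonneg _)
                (mul_nonneg (mul_nonneg S.hC.le (pow_nonneg S.hq0.le n)) hrp)
            · exact mul_le_mul hB2 hD12 (norm_nonneg _)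
                (mul_nonneg (norm_nonneg _) (S.one_add_ccq_nonneg n))
        _ = S.Hb (n+1) * ‖x - y‖ ^ S.α := by rw [Hb]; ring

/-- The key recursive bound : `Rr m * Hb m ≤ a * κ^m * (geom sum) * W m`. -/
lemma RHb_le (m : ℕ) : S.Rr m * S.Hb m
    ≤ ((S.κ / S.μ') * S.Kc * S.C) * S.κ ^ m * (∑ j ∈ Finset.range m, S.q ^ j) * S.W m := by
  set a : ℝ := (S.κ / S.μ') * S.Kc * S.C with ha
  have ha0 : 0 ≤ a := by
    rw [ha]
    exact mul_nonneg (mul_nonneg (div_nonneg (le_trans zero_le_one S.hκ1) S.hμ'0.le)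
      (le_trans zero_le_one S.hKc1)) S.hC.le
  have hκ0 : (0:ℝ) ≤ S.κ := le_trans zero_le_one S.hκ1
  induction m with
  | zero =>
      rw [Hb, mul_zero, Finset.range_zero, Finset.sum_empty, mul_zero, zero_mul]
  | succ n ih =>
      have hRr : S.Rr (n+1) = S.Rr n * ‖((S.A (n+1)).symm : Ei →L[ℝ] Ei)‖ := by
        rw [Rr, Rr, Finset.prod_Icc_succ_top (by omega)]
      have hW : S.W (n+1) = S.W n * (1 + S.cc * S.q ^ n) := by
        rw [W, W, Finset.prod_Icc_succ_top (by omega)]; norm_num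
      have hAinv : ‖((S.A (n+1)).symm : Ei →L[ℝ] Ei)‖ ≤ S.κ / S.μ' :=
        S.normAinv_le (n+1) (by omega)
      have hAA : ‖((S.A (n+1)).symm : Ei →L[ℝ] Ei)‖ * ‖(S.A (n+1) : Ei →L[ℝ] Ei)‖ ≤ S.κ := by
        rw [mul_comm]; exact S.h3 (n+1) (by omega)
      rw [Hb, hRr, mul_add]
      have T1 : (S.Rr n * ‖((S.A (n+1)).symm : Ei →L[ℝ] Ei)‖) * (S.C * S.q ^ n * (S.P n * S.W n))
          ≤ a * S.κ ^ n * S.q ^ n := by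
        have h1 : S.Rr n * (S.P n * S.W n) ≤ S.κ ^ n * S.Kc := S.RPW_le n
        have h2 : 0 ≤ S.Rr n * (S.P n * S.W n) :=
          mul_nonneg (S.Rr_nonneg n) (mul_nonneg (S.P_nonneg n) (S.W_nonneg n))
        have h3 : 0 ≤ S.q ^ n := pow_nonneg S.hq0.le n
        calc (S.Rr n * ‖((S.A (n+1)).symm : Ei →L[ℝ] Ei)‖) * (S.C * S.q ^ n * (S.P n * S.W n))
            = ‖((S.A (n+1)).symm : Ei →L[ℝ] Ei)‖ * (S.Rr n * (S.P n * S.W n)) * S.C * S.q ^ n := by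
              ring
          _ ≤ (S.κ / S.μ') * (S.κ ^ n * S.Kc) * S.C * S.q ^ n := by
              have hb := mul_le_mul hAinv h1 h2 (div_nonneg hκ0 S.hμ'0.le)
              exact mul_le_mul_of_nonneg_right
                (mul_le_mul_of_nonneg_right hb S.hC.le) h3
          _ = a * S.κ ^ n * S.q ^ n := by rw [ha]; ring
      have T2 : (S.Rr n * ‖((S.A (n+1)).symm : Ei →L[ℝ] Ei)‖)
            * ((‖(S.A (n+1) : Ei →L[ℝ] Ei)‖ * (1 + S.cc * S.q ^ n)) * S.Hb n)
          ≤ S.κ * (1 + S.cc * S.q ^ n)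
              * (a * S.κ ^ n * (∑ j ∈ Finset.range n, S.q ^ j) * S.W n) := by
        have h1 : S.Rr n * S.Hb n
            ≤ a * S.κ ^ n * (∑ j ∈ Finset.range n, S.q ^ j) * S.W n := ih
        have h2 : 0 ≤ S.Rr n * S.Hb n := mul_nonneg (S.Rr_nonneg n) (S.Hb_nonneg n)
        have h3 : 0 ≤ 1 + S.cc * S.q ^ n := S.one_add_ccq_nonneg n
        calc (S.Rr n * ‖((S.A (n+1)).symm : Ei →L[ℝ] Ei)‖)
              * ((‖(S.A (n+1) : Ei →L[ℝ] Ei)‖ * (1 + S.cc * S.q ^ n)) * S.Hb n)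
            = (‖((S.A (n+1)).symm : Ei →L[ℝ] Ei)‖ * ‖(S.A (n+1) : Ei →L[ℝ] Ei)‖)
                * (1 + S.cc * S.q ^ n) * (S.Rr n * S.Hb n) := by ring
          _ ≤ S.κ * (1 + S.cc * S.q ^ n)
                * (a * S.κ ^ n * (∑ j ∈ Finset.range n, S.q ^ j) * S.W n) := by
              apply mul_le_mul _ h1 h2 _
              · exact mul_le_mul_of_nonneg_right hAA h3
              · exact mul_nonneg hκ0 h3
      refine (add_le_add T1 T2).trans ?_
      rw [Finset.sum_range_succ, hW]
      have hW1 : 1 ≤ S.W n := S.W_one_le n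
      have hgs : 0 ≤ ∑ j ∈ Finset.range n, S.q ^ j :=
        Finset.sum_nonneg fun j _ => pow_nonneg S.hq0.le j
      have hq3 : 0 ≤ S.q ^ n := pow_nonneg S.hq0.le n
      have h3 : 0 ≤ 1 + S.cc * S.q ^ n := S.one_add_ccq_nonneg n
      have e1 : S.κ * (1 + S.cc * S.q ^ n)
            * (a * S.κ ^ n * (∑ j ∈ Finset.range n, S.q ^ j) * S.W n)
          = a * S.κ ^ (n+1) * (∑ j ∈ Finset.range n, S.q ^ j) * (S.W n * (1 + S.cc * S.q ^ n)) := by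
        rw [pow_succ]; ring
      rw [e1]
      have h5 : a * S.κ ^ n * S.q ^ n
          ≤ a * S.κ ^ (n+1) * S.q ^ n * (S.W n * (1 + S.cc * S.q ^ n)) := by
        have hc1 : (1:ℝ) ≤ 1 + S.cc * S.q ^ n := by
          linarith [mul_nonneg S.hcc0.le hq3]
        have hWc : 1 ≤ S.W n * (1 + S.cc * S.q ^ n) := by nlinarith
        have hκp : S.κ ^ n ≤ S.κ ^ (n+1) := by
          rw [pow_succ]
          nlinarith [pow_nonneg hκ0 n, S.hκ1]
        have s1 : a * S.κ ^ n * S.q ^ n ≤ a * S.κ ^ (n+1) * S.q ^ n :=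
          mul_le_mul_of_nonneg_right (mul_le_mul_of_nonneg_left hκp ha0) hq3
        have base' : 0 ≤ a * S.κ ^ (n+1) * S.q ^ n :=
          mul_nonneg (mul_nonneg ha0 (pow_nonneg hκ0 _)) hq3
        calc a * S.κ ^ n * S.q ^ n ≤ a * S.κ ^ (n+1) * S.q ^ n := s1
          _ = a * S.κ ^ (n+1) * S.q ^ n * 1 := (mul_one _).symm
          _ ≤ _ := mul_le_mul_of_nonneg_left hWc base'
      have expand : a * S.κ ^ (n+1) * ((∑ j ∈ Finset.range n, S.q ^ j) + S.q ^ n)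
            * (S.W n * (1 + S.cc * S.q ^ n))
          = a * S.κ ^ (n+1) * (∑ j ∈ Finset.range n, S.q ^ j) * (S.W n * (1 + S.cc * S.q ^ n))
            + a * S.κ ^ (n+1) * S.q ^ n * (S.W n * (1 + S.cc * S.q ^ n)) := by ring
      rw [expand]
      linarith

/-- Global bound `Rr m * Hb m ≤ M κ^m`. -/
lemma RHb_le' (m : ℕ) : S.Rr m * S.Hb m
    ≤ ((S.κ / S.μ') * S.Kc * S.C) * (1 / (1 - S.q)) * S.Kc * S.κ ^ m := by
  have h := S.RHb_le m
  have hgs := geomsum_le S.q S.hq0.le S.hq1 m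
  have hW := S.W_le_Kc m
  have ha0 : 0 ≤ (S.κ / S.μ') * S.Kc * S.C :=
    mul_nonneg (mul_nonneg (div_nonneg (le_trans zero_le_one S.hκ1) S.hμ'0.le)
      (le_trans zero_le_one S.hKc1)) S.hC.le
  have hκ0 : 0 ≤ S.κ ^ m := pow_nonneg (le_trans zero_le_one S.hκ1) m
  have hgs0 : 0 ≤ ∑ j ∈ Finset.range m, S.q ^ j :=
    Finset.sum_nonneg fun j _ => pow_nonneg S.hq0.le j
  have hW0 := S.W_nonneg m
  calc S.Rr m * S.Hb m
      ≤ ((S.κ / S.μ') * S.Kc * S.C) * S.κ ^ m * (∑ j ∈ Finset.range m, S.q ^ j) * S.W m := h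
    _ ≤ ((S.κ / S.μ') * S.Kc * S.C) * S.κ ^ m * (1 / (1 - S.q)) * S.Kc := by
        have b1 : ((S.κ / S.μ') * S.Kc * S.C) * S.κ ^ m * (∑ j ∈ Finset.range m, S.q ^ j) * S.W m
            ≤ ((S.κ / S.μ') * S.Kc * S.C) * S.κ ^ m * (∑ j ∈ Finset.range m, S.q ^ j) * S.Kc :=
          mul_le_mul_of_nonneg_left hW (mul_nonneg (mul_nonneg ha0 hκ0) hgs0)
        have b2 : ((S.κ / S.μ') * S.Kc * S.C) * S.κ ^ m * (∑ j ∈ Finset.range m, S.q ^ j) * S.Kc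
            ≤ ((S.κ / S.μ') * S.Kc * S.C) * S.κ ^ m * (1 / (1 - S.q)) * S.Kc := by
          have hK0 : (0:ℝ) ≤ S.Kc := le_trans zero_le_one S.hKc1
          apply mul_le_mul_of_nonneg_right _ hK0
          exact mul_le_mul_of_nonneg_left hgs (mul_nonneg ha0 hκ0)
        exact b1.trans b2
    _ = _ := by ring

def Fn (n : ℕ) : Ei → Ei := fun x => (Lcomp S.A n).symm (comps S.f n x)

lemma Lcomp_symm_succ (n : ℕ) :
    ((Lcomp S.A (n+1)).symm : Ei →L[ℝ] Ei)
      = ((Lcomp S.A n).symm : Ei →L[ℝ] Ei).comp (((S.A (n+1)).symm : Ei →L[ℝ] Ei)) := by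
  ext v
  simp [Lcomp]

lemma Fn_hasFDeriv (n : ℕ) {x : Ei} (hx : x ∈ S.dom) :
    HasFDerivAt (S.Fn n)
      (((Lcomp S.A n).symm : Ei →L[ℝ] Ei).comp (fderiv ℝ (comps S.f n) x)) x := by
  have h1 : HasFDerivAt (comps S.f n) (fderiv ℝ (comps S.f n) x) x :=
    (S.comps_diff n hx).hasFDerivAt
  exact (((Lcomp S.A n).symm : Ei →L[ℝ] Ei).hasFDerivAt).comp x h1

lemma Fn_fderiv (n : ℕ) {x : Ei} (hx : x ∈ S.dom) :
    fderiv ℝ (S.Fn n) x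
      = ((Lcomp S.A n).symm : Ei →L[ℝ] Ei).comp (fderiv ℝ (comps S.f n) x) :=
  (S.Fn_hasFDeriv n hx).fderiv

lemma kinv_nonneg : 0 ≤ S.κ / S.μ' := div_nonneg (le_trans zero_le_one S.hκ1) S.hμ'0.le

/-- C⁰ step estimate. -/
lemma step0 (m : ℕ) {x : Ei} (hx : x ∈ S.dom) :
    ‖S.Fn (m+1) x - S.Fn m x‖
      ≤ ((S.κ / S.μ') * S.C * S.ρ ^ S.α * S.ρ * S.Kc) * (S.κ ^ m * S.q ^ m) := by
  set y := comps S.f m x with hy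
  have hymem : y ∈ S.dom := S.comps_mem m hx
  have e1 : S.Fn (m+1) x = (Lcomp S.A m).symm ((S.A (m+1)).symm (S.f (m+1) y)) := by
    rw [Fn]
    have : comps S.f (m+1) x = S.f (m+1) y := rfl
    rw [this]
    rfl
  have e2 : S.Fn (m+1) x - S.Fn m x
      = (Lcomp S.A m).symm ((S.A (m+1)).symm (S.f (m+1) y - S.A (m+1) y)) := by
    rw [e1, Fn, ← hy, ← map_sub]
    congr 1
    rw [map_sub, ContinuousLinearEquiv.symm_apply_apply]
  rw [e2]
  have b1 : ‖(S.A (m+1)).symm (S.f (m+1) y - S.A (m+1) y)‖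
      ≤ (S.κ / S.μ') * (S.C * ‖y‖ ^ S.α * ‖y‖) := by
    calc ‖(S.A (m+1)).symm (S.f (m+1) y - S.A (m+1) y)‖
        ≤ ‖((S.A (m+1)).symm : Ei →L[ℝ] Ei)‖ * ‖S.f (m+1) y - S.A (m+1) y‖ :=
          ((S.A (m+1)).symm : Ei →L[ℝ] Ei).le_opNorm _
      _ ≤ (S.κ / S.μ') * (S.C * ‖y‖ ^ S.α * ‖y‖) :=
          mul_le_mul (S.normAinv_le (m+1) (by omega)) (S.taylor (m+1) (by omega) hymem)
            (norm_nonneg _) S.kinv_nonneg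
  have b2 : ‖(Lcomp S.A m).symm ((S.A (m+1)).symm (S.f (m+1) y - S.A (m+1) y))‖
      ≤ S.Rr m * ((S.κ / S.μ') * (S.C * ‖y‖ ^ S.α * ‖y‖)) := by
    calc ‖(Lcomp S.A m).symm ((S.A (m+1)).symm (S.f (m+1) y - S.A (m+1) y))‖
        ≤ ‖((Lcomp S.A m).symm : Ei →L[ℝ] Ei)‖
            * ‖(S.A (m+1)).symm (S.f (m+1) y - S.A (m+1) y)‖ :=
          ((Lcomp S.A m).symm : Ei →L[ℝ] Ei).le_opNorm _
      _ ≤ _ := mul_le_mul (S.norm_Lcomp_symm_le m) b1 (norm_nonneg _) (S.Rr_nonneg m)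
  refine b2.trans ?_
  have hyα : ‖y‖ ^ S.α ≤ S.q ^ m * S.ρ ^ S.α := S.norm_comps_rpow m hx
  have hynorm : ‖y‖ ≤ S.P m * S.W m * S.ρ := by
    have h1 := S.comps_norm_le' m x hx
    have h2 : ‖x‖ ≤ S.ρ := (S.mem_dom_iff.1 hx).le
    have h3 : 0 ≤ S.P m * S.W m := mul_nonneg (S.P_nonneg m) (S.W_nonneg m)
    nlinarith
  have hy0 : 0 ≤ ‖y‖ := norm_nonneg _
  have hyα0 : 0 ≤ ‖y‖ ^ S.α := Real.rpow_nonneg hy0 _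
  have key : S.C * ‖y‖ ^ S.α * ‖y‖ ≤ S.C * (S.q ^ m * S.ρ ^ S.α) * (S.P m * S.W m * S.ρ) := by
    have := mul_le_mul hyα hynorm hy0 (by
      exact mul_nonneg (pow_nonneg S.hq0.le m) (Real.rpow_nonneg S.hρ.le _))
    nlinarith [S.hC.le]
  have hRPW := S.RPW_le m
  have hRr0 := S.Rr_nonneg m
  calc S.Rr m * ((S.κ / S.μ') * (S.C * ‖y‖ ^ S.α * ‖y‖))
      ≤ S.Rr m * ((S.κ / S.μ') * (S.C * (S.q ^ m * S.ρ ^ S.α) * (S.P m * S.W m * S.ρ))) := by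
        apply mul_le_mul_of_nonneg_left _ hRr0
        exact mul_le_mul_of_nonneg_left key S.kinv_nonneg
    _ = ((S.κ / S.μ') * S.C * S.ρ ^ S.α * S.ρ * S.q ^ m) * (S.Rr m * (S.P m * S.W m)) := by
        ring
    _ ≤ ((S.κ / S.μ') * S.C * S.ρ ^ S.α * S.ρ * S.q ^ m) * (S.κ ^ m * S.Kc) := by
        apply mul_le_mul_of_nonneg_left hRPW
        exact mul_nonneg (mul_nonneg (mul_nonneg (mul_nonneg S.kinv_nonneg S.hC.le)
          (Real.rpow_nonneg S.hρ.le S.α)) S.hρ.le) (pow_nonneg S.hq0.le m)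
    _ = ((S.κ / S.μ') * S.C * S.ρ ^ S.α * S.ρ * S.Kc) * (S.κ ^ m * S.q ^ m) := by ring

lemma fderiv_diff_eq (m : ℕ) {x : Ei} (hx : x ∈ S.dom) :
    fderiv ℝ (S.Fn (m+1)) x - fderiv ℝ (S.Fn m) x
      = ((Lcomp S.A m).symm : Ei →L[ℝ] Ei).comp
          (((((S.A (m+1)).symm : Ei →L[ℝ] Ei)).comp
              (fderiv ℝ (S.f (m+1)) (comps S.f m x) - (S.A (m+1) : Ei →L[ℝ] Ei))).comp
            (fderiv ℝ (comps S.f m) x)) := by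
  rw [S.Fn_fderiv (m+1) hx, S.Fn_fderiv m hx, S.comps_fderiv_succ m hx, Lcomp_symm_succ]
  ext v
  simp [ContinuousLinearMap.comp_apply, ContinuousLinearMap.sub_apply, map_sub,
    ContinuousLinearEquiv.symm_apply_apply]

/-- inner operator bound : `‖A⁻¹ ∘ (Df(y) − A)‖ ≤ (κ/μ') C ‖y‖^α`. -/
lemma inner_bound (m : ℕ) {y : Ei} (hy : y ∈ S.dom) :
    ‖(((S.A (m+1)).symm : Ei →L[ℝ] Ei)).comp
        (fderiv ℝ (S.f (m+1)) y - (S.A (m+1) : Ei →L[ℝ] Ei))‖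
      ≤ (S.κ / S.μ') * (S.C * ‖y‖ ^ S.α) := by
  calc ‖(((S.A (m+1)).symm : Ei →L[ℝ] Ei)).comp
        (fderiv ℝ (S.f (m+1)) y - (S.A (m+1) : Ei →L[ℝ] Ei))‖
      ≤ ‖(((S.A (m+1)).symm : Ei →L[ℝ] Ei))‖
          * ‖fderiv ℝ (S.f (m+1)) y - (S.A (m+1) : Ei →L[ℝ] Ei)‖ :=
        ContinuousLinearMap.opNorm_comp_le _ _
    _ ≤ (S.κ / S.μ') * (S.C * ‖y‖ ^ S.α) :=
        mul_le_mul (S.normAinv_le (m+1) (by omega)) (S.df_sub_A (m+1) (by omega) hy)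
          (norm_nonneg _) S.kinv_nonneg

/-- C¹ step estimate. -/
lemma step1 (m : ℕ) {x : Ei} (hx : x ∈ S.dom) :
    ‖fderiv ℝ (S.Fn (m+1)) x - fderiv ℝ (S.Fn m) x‖
      ≤ ((S.κ / S.μ') * S.C * S.ρ ^ S.α * S.Kc) * (S.κ ^ m * S.q ^ m) := by
  rw [S.fderiv_diff_eq m hx]
  set y := comps S.f m x with hy
  have hymem : y ∈ S.dom := S.comps_mem m hx
  have b1 := S.inner_bound m hymem
  have b2 : ‖fderiv ℝ (comps S.f m) x‖ ≤ S.P m * S.W m := S.comps_fderiv_norm_le m x hx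
  have hyα : ‖y‖ ^ S.α ≤ S.q ^ m * S.ρ ^ S.α := S.norm_comps_rpow m hx
  have hPW0 : 0 ≤ S.P m * S.W m := mul_nonneg (S.P_nonneg m) (S.W_nonneg m)
  have c1 : ‖((((S.A (m+1)).symm : Ei →L[ℝ] Ei)).comp
        (fderiv ℝ (S.f (m+1)) y - (S.A (m+1) : Ei →L[ℝ] Ei))).comp
            (fderiv ℝ (comps S.f m) x)‖
      ≤ ((S.κ / S.μ') * (S.C * (S.q ^ m * S.ρ ^ S.α))) * (S.P m * S.W m) := by
    refine (ContinuousLinearMap.opNorm_comp_le _ _).trans ?_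
    apply mul_le_mul _ b2 (norm_nonneg _)
    · exact mul_nonneg S.kinv_nonneg
        (mul_nonneg S.hC.le (mul_nonneg (pow_nonneg S.hq0.le m) (Real.rpow_nonneg S.hρ.le _)))
    · refine b1.trans ?_
      exact mul_le_mul_of_nonneg_left (mul_le_mul_of_nonneg_left hyα S.hC.le) S.kinv_nonneg
  calc ‖((Lcomp S.A m).symm : Ei →L[ℝ] Ei).comp
          (((((S.A (m+1)).symm : Ei →L[ℝ] Ei)).comp
              (fderiv ℝ (S.f (m+1)) y - (S.A (m+1) : Ei →L[ℝ] Ei))).comp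
            (fderiv ℝ (comps S.f m) x))‖
      ≤ S.Rr m * (((S.κ / S.μ') * (S.C * (S.q ^ m * S.ρ ^ S.α))) * (S.P m * S.W m)) := by
        refine (ContinuousLinearMap.opNorm_comp_le _ _).trans ?_
        exact mul_le_mul (S.norm_Lcomp_symm_le m) c1 (norm_nonneg _) (S.Rr_nonneg m)
    _ = ((S.κ / S.μ') * S.C * S.ρ ^ S.α * S.q ^ m) * (S.Rr m * (S.P m * S.W m)) := by ring
    _ ≤ ((S.κ / S.μ') * S.C * S.ρ ^ S.α * S.q ^ m) * (S.κ ^ m * S.Kc) := by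
        apply mul_le_mul_of_nonneg_left (S.RPW_le m)
        exact mul_nonneg (mul_nonneg (mul_nonneg S.kinv_nonneg S.hC.le)
          (Real.rpow_nonneg S.hρ.le _)) (pow_nonneg S.hq0.le m)
    _ = _ := by ring

/-- Hölder step estimate. -/
lemma step2 (m : ℕ) {x x' : Ei} (hx : x ∈ S.dom) (hx' : x' ∈ S.dom) :
    ‖(fderiv ℝ (S.Fn (m+1)) x - fderiv ℝ (S.Fn m) x)
        - (fderiv ℝ (S.Fn (m+1)) x' - fderiv ℝ (S.Fn m) x')‖
      ≤ (((S.κ / S.μ') * S.C * S.Kc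
            + (S.κ / S.μ') * S.C * S.ρ ^ S.α
              * (((S.κ / S.μ') * S.Kc * S.C) * (1 / (1 - S.q)) * S.Kc)) * (S.κ ^ m * S.q ^ m))
          * ‖x - x'‖ ^ S.α := by
  rw [S.fderiv_diff_eq m hx, S.fderiv_diff_eq m hx']
  set y := comps S.f m x with hy
  set y' := comps S.f m x' with hy'
  set Dfx := fderiv ℝ (S.f (m+1)) y
  set Dfx' := fderiv ℝ (S.f (m+1)) y'
  set Dgx := fderiv ℝ (comps S.f m) x
  set Dgx' := fderiv ℝ (comps S.f m) x'
  set An := (S.A (m+1) : Ei →L[ℝ] Ei)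
  set Ain := (((S.A (m+1)).symm : Ei →L[ℝ] Ei))
  set B := ((Lcomp S.A m).symm : Ei →L[ℝ] Ei)
  have hymem : y ∈ S.dom := S.comps_mem m hx
  have hymem' : y' ∈ S.dom := S.comps_mem m hx'
  have key : B.comp ((Ain.comp (Dfx - An)).comp Dgx)
        - B.comp ((Ain.comp (Dfx' - An)).comp Dgx')
      = B.comp ((Ain.comp (Dfx - Dfx')).comp Dgx)
        + B.comp ((Ain.comp (Dfx' - An)).comp (Dgx - Dgx')) := by
    rw [← ContinuousLinearMap.comp_sub, ← ContinuousLinearMap.comp_add]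
    congr 1
    ext v
    simp [ContinuousLinearMap.comp_apply, ContinuousLinearMap.sub_apply,
      ContinuousLinearMap.add_apply, map_sub]
    abel
  rw [key]
  have hrp : (0:ℝ) ≤ ‖x - x'‖ ^ S.α := Real.rpow_nonneg (norm_nonneg _) _
  -- term 1
  have hT1 : ‖B.comp ((Ain.comp (Dfx - Dfx')).comp Dgx)‖
      ≤ ((S.κ / S.μ') * S.C * S.Kc) * (S.κ ^ m * S.q ^ m) * ‖x - x'‖ ^ S.α := by
    have hDf : ‖Dfx - Dfx'‖ ≤ S.C * (S.q ^ m * ‖x - x'‖ ^ S.α) := by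
      have h := S.h1Hol (m+1) (by omega) y hymem y' hymem'
      refine h.trans ?_
      have h2 : ‖y - y'‖ ≤ S.μ ^ m * ‖x - x'‖ := S.comps_lip m x hx x' hx'
      have h3 : ‖y - y'‖ ^ S.α ≤ (S.μ ^ m * ‖x - x'‖) ^ S.α :=
        Real.rpow_le_rpow (norm_nonneg _) h2 S.hα0.le
      have h4 : (S.μ ^ m * ‖x - x'‖) ^ S.α = S.q ^ m * ‖x - x'‖ ^ S.α := by
        rw [Real.mul_rpow (pow_nonneg S.hμ0.le m) (norm_nonneg _),
          pow_rpow_comm _ S.hμ0.le]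
        rfl
      rw [← h4] at *
      exact mul_le_mul_of_nonneg_left h3 S.hC.le
    have hAin : ‖Ain‖ ≤ S.κ / S.μ' := S.normAinv_le (m+1) (by omega)
    have hDg : ‖Dgx‖ ≤ S.P m * S.W m := S.comps_fderiv_norm_le m x hx
    have hB : ‖B‖ ≤ S.Rr m := S.norm_Lcomp_symm_le m
    have c1 : ‖(Ain.comp (Dfx - Dfx')).comp Dgx‖
        ≤ ((S.κ / S.μ') * (S.C * (S.q ^ m * ‖x - x'‖ ^ S.α))) * (S.P m * S.W m) := by
      refine (ContinuousLinearMap.opNorm_comp_le _ _).trans ?_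
      apply mul_le_mul _ hDg (norm_nonneg _)
      · exact mul_nonneg S.kinv_nonneg (mul_nonneg S.hC.le
          (mul_nonneg (pow_nonneg S.hq0.le m) hrp))
      · refine (ContinuousLinearMap.opNorm_comp_le _ _).trans ?_
        exact mul_le_mul hAin hDf (norm_nonneg _) S.kinv_nonneg
    calc ‖B.comp ((Ain.comp (Dfx - Dfx')).comp Dgx)‖
        ≤ S.Rr m * (((S.κ / S.μ') * (S.C * (S.q ^ m * ‖x - x'‖ ^ S.α))) * (S.P m * S.W m)) := by
          refine (ContinuousLinearMap.opNorm_comp_le _ _).trans ?_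
          exact mul_le_mul hB c1 (norm_nonneg _) (S.Rr_nonneg m)
      _ = ((S.κ / S.μ') * S.C * S.q ^ m) * (S.Rr m * (S.P m * S.W m)) * ‖x - x'‖ ^ S.α := by
          ring
      _ ≤ ((S.κ / S.μ') * S.C * S.q ^ m) * (S.κ ^ m * S.Kc) * ‖x - x'‖ ^ S.α := by
          apply mul_le_mul_of_nonneg_right _ hrp
          apply mul_le_mul_of_nonneg_left (S.RPW_le m)
          exact mul_nonneg (mul_nonneg S.kinv_nonneg S.hC.le) (pow_nonneg S.hq0.le m)
      _ = _ := by ring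
  -- term 2
  have hT2 : ‖B.comp ((Ain.comp (Dfx' - An)).comp (Dgx - Dgx'))‖
      ≤ ((S.κ / S.μ') * S.C * S.ρ ^ S.α
            * (((S.κ / S.μ') * S.Kc * S.C) * (1 / (1 - S.q)) * S.Kc))
          * (S.κ ^ m * S.q ^ m) * ‖x - x'‖ ^ S.α := by
    have hinner : ‖Ain.comp (Dfx' - An)‖ ≤ (S.κ / S.μ') * (S.C * (S.q ^ m * S.ρ ^ S.α)) := by
      refine (S.inner_bound m hymem').trans ?_
      have hyα : ‖y'‖ ^ S.α ≤ S.q ^ m * S.ρ ^ S.α := S.norm_comps_rpow m hx'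
      exact mul_le_mul_of_nonneg_left (mul_le_mul_of_nonneg_left hyα S.hC.le) S.kinv_nonneg
    have hDD : ‖Dgx - Dgx'‖ ≤ S.Hb m * ‖x - x'‖ ^ S.α := S.comps_fderiv_hol m x hx x' hx'
    have hB : ‖B‖ ≤ S.Rr m := S.norm_Lcomp_symm_le m
    have c1 : ‖(Ain.comp (Dfx' - An)).comp (Dgx - Dgx')‖
        ≤ ((S.κ / S.μ') * (S.C * (S.q ^ m * S.ρ ^ S.α))) * (S.Hb m * ‖x - x'‖ ^ S.α) := by
      refine (ContinuousLinearMap.opNorm_comp_le _ _).trans ?_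
      apply mul_le_mul hinner hDD (norm_nonneg _)
      exact mul_nonneg S.kinv_nonneg (mul_nonneg S.hC.le
        (mul_nonneg (pow_nonneg S.hq0.le m) (Real.rpow_nonneg S.hρ.le _)))
    calc ‖B.comp ((Ain.comp (Dfx' - An)).comp (Dgx - Dgx'))‖
        ≤ S.Rr m * (((S.κ / S.μ') * (S.C * (S.q ^ m * S.ρ ^ S.α))) * (S.Hb m * ‖x - x'‖ ^ S.α)) := by
          refine (ContinuousLinearMap.opNorm_comp_le _ _).trans ?_
          exact mul_le_mul hB c1 (norm_nonneg _) (S.Rr_nonneg m)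
      _ = ((S.κ / S.μ') * S.C * S.ρ ^ S.α * S.q ^ m) * (S.Rr m * S.Hb m) * ‖x - x'‖ ^ S.α := by
          ring
      _ ≤ ((S.κ / S.μ') * S.C * S.ρ ^ S.α * S.q ^ m)
            * (((S.κ / S.μ') * S.Kc * S.C) * (1 / (1 - S.q)) * S.Kc * S.κ ^ m)
            * ‖x - x'‖ ^ S.α := by
          apply mul_le_mul_of_nonneg_right _ hrp
          apply mul_le_mul_of_nonneg_left (S.RHb_le' m)
          exact mul_nonneg (mul_nonneg (mul_nonneg S.kinv_nonneg S.hC.le)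
            (Real.rpow_nonneg S.hρ.le _)) (pow_nonneg S.hq0.le m)
      _ = _ := by ring
  calc ‖B.comp ((Ain.comp (Dfx - Dfx')).comp Dgx)
        + B.comp ((Ain.comp (Dfx' - An)).comp (Dgx - Dgx'))‖
      ≤ ‖B.comp ((Ain.comp (Dfx - Dfx')).comp Dgx)‖
        + ‖B.comp ((Ain.comp (Dfx' - An)).comp (Dgx - Dgx'))‖ := norm_add_le _ _
    _ ≤ _ := by
        refine (add_le_add hT1 hT2).trans_eq ?_
        ring

def c0 : ℝ := (S.κ / S.μ') * S.C * S.ρ ^ S.α * S.ρ * S.Kc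
def c1 : ℝ := (S.κ / S.μ') * S.C * S.ρ ^ S.α * S.Kc
def c2 : ℝ := (S.κ / S.μ') * S.C * S.Kc
    + (S.κ / S.μ') * S.C * S.ρ ^ S.α * (((S.κ / S.μ') * S.Kc * S.C) * (1 / (1 - S.q)) * S.Kc)
def rat : ℝ := S.κ * S.q
def C8 : ℝ := (S.c0 + S.c1 + S.c2 + 1) / S.rat

lemma hKc0 : (0:ℝ) ≤ S.Kc := le_trans zero_le_one S.hKc1
lemma hρα0 : (0:ℝ) ≤ S.ρ ^ S.α := (Real.rpow_nonneg S.hρ.le _)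
lemma c0_nonneg : 0 ≤ S.c0 :=
  mul_nonneg (mul_nonneg (mul_nonneg (mul_nonneg S.kinv_nonneg S.hC.le) S.hρα0) S.hρ.le) S.hKc0
lemma c1_nonneg : 0 ≤ S.c1 :=
  mul_nonneg (mul_nonneg (mul_nonneg S.kinv_nonneg S.hC.le) S.hρα0) S.hKc0
lemma c2_nonneg : 0 ≤ S.c2 := by
  have h1 : (0:ℝ) ≤ 1 / (1 - S.q) := div_nonneg zero_le_one (by linarith [S.hq1])
  have h2 : 0 ≤ ((S.κ / S.μ') * S.Kc * S.C) * (1 / (1 - S.q)) * S.Kc :=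
    mul_nonneg (mul_nonneg (mul_nonneg (mul_nonneg S.kinv_nonneg S.hKc0) S.hC.le) h1) S.hKc0
  have h3 : 0 ≤ (S.κ / S.μ') * S.C * S.Kc :=
    mul_nonneg (mul_nonneg S.kinv_nonneg S.hC.le) S.hKc0
  have h4 : 0 ≤ (S.κ / S.μ') * S.C * S.ρ ^ S.α :=
    mul_nonneg (mul_nonneg S.kinv_nonneg S.hC.le) S.hρα0
  have := mul_nonneg h4 h2
  rw [c2]; linarith
lemma rat_pos : 0 < S.rat := S.hr0
lemma rat_lt_one : S.rat < 1 := S.hr1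
lemma C8_pos : 0 < S.C8 := by
  rw [C8]
  apply div_pos _ S.rat_pos
  linarith [S.c0_nonneg, S.c1_nonneg, S.c2_nonneg]
lemma C8_mul_rat : S.C8 * S.rat = S.c0 + S.c1 + S.c2 + 1 := by
  rw [C8, div_mul_eq_mul_div, mul_div_assoc, div_self S.rat_pos.ne', mul_one]

lemma coef_le (c : ℝ) (hc : 0 ≤ c) (hle : c ≤ S.c0 + S.c1 + S.c2 + 1) (m : ℕ) :
    c * (S.κ ^ m * S.q ^ m) ≤ S.C8 * S.rat ^ (m+1) := by
  have e : S.κ ^ m * S.q ^ m = S.rat ^ m := (mul_pow _ _ _).symm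
  rw [e, pow_succ', ← mul_assoc, C8_mul_rat]
  exact mul_le_mul_of_nonneg_right hle (pow_nonneg S.rat_pos.le m)

lemma c0_le : S.c0 ≤ S.c0 + S.c1 + S.c2 + 1 := by linarith [S.c1_nonneg, S.c2_nonneg]
lemma c1_le : S.c1 ≤ S.c0 + S.c1 + S.c2 + 1 := by linarith [S.c0_nonneg, S.c2_nonneg]
lemma c2_le : S.c2 ≤ S.c0 + S.c1 + S.c2 + 1 := by linarith [S.c0_nonneg, S.c1_nonneg]

/-- consolidated one-step `C^{1+α}` estimate. -/
lemma stepAll (m : ℕ) :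
    C1aDistLE S.α S.dom (S.Fn (m+1)) (S.Fn m) (S.C8 * S.rat ^ (m+1)) := by
  refine ⟨fun x hx => ?_, fun x hx => ?_, fun x hx y hy => ?_⟩
  · exact (S.step0 m hx).trans (by
      have := S.coef_le S.c0 S.c0_nonneg S.c0_le m
      rw [c0] at this; exact this)
  · exact (S.step1 m hx).trans (by
      have := S.coef_le S.c1 S.c1_nonneg S.c1_le m
      rw [c1] at this; exact this)
  · refine (S.step2 m hx hy).trans ?_
    have h := S.coef_le S.c2 S.c2_nonneg S.c2_le m
    rw [c2] at h
    exact mul_le_mul_of_nonneg_right h (Real.rpow_nonneg (norm_nonneg _) _)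

def Flim : Ei → Ei := fun x => limUnder atTop (fun n => S.Fn n x)
def Glim : Ei → (Ei →L[ℝ] Ei) := fun x => limUnder atTop (fun n => fderiv ℝ (S.Fn n) x)

lemma dist_Fn_succ {x : Ei} (hx : x ∈ S.dom) (n : ℕ) :
    dist (S.Fn n x) (S.Fn (n+1) x) ≤ (S.C8 * S.rat) * S.rat ^ n := by
  rw [dist_eq_norm, norm_sub_rev]
  have := ((S.stepAll n).1) x hx
  rw [pow_succ'] at this
  calc ‖S.Fn (n+1) x - S.Fn n x‖ ≤ S.C8 * (S.rat * S.rat ^ n) := this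
    _ = (S.C8 * S.rat) * S.rat ^ n := by ring

lemma cauchy_Fn {x : Ei} (hx : x ∈ S.dom) : CauchySeq (fun n => S.Fn n x) :=
  cauchySeq_of_le_geometric S.rat (S.C8 * S.rat) S.rat_lt_one (S.dist_Fn_succ hx)

lemma tendsto_Fn {x : Ei} (hx : x ∈ S.dom) :
    Tendsto (fun n => S.Fn n x) atTop (𝓝 (S.Flim x)) :=
  (S.cauchy_Fn hx).tendsto_limUnder

lemma dist_Fn_lim {x : Ei} (hx : x ∈ S.dom) (n : ℕ) :
    dist (S.Fn n x) (S.Flim x) ≤ (S.C8 * S.rat) * S.rat ^ n / (1 - S.rat) :=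
  dist_le_of_le_geometric_of_tendsto S.rat (S.C8 * S.rat) S.rat_lt_one
    (S.dist_Fn_succ hx) (S.tendsto_Fn hx) n

lemma dist_DFn_succ {x : Ei} (hx : x ∈ S.dom) (n : ℕ) :
    dist (fderiv ℝ (S.Fn n) x) (fderiv ℝ (S.Fn (n+1)) x) ≤ (S.C8 * S.rat) * S.rat ^ n := by
  rw [dist_eq_norm, norm_sub_rev]
  have := ((S.stepAll n).2.1) x hx
  rw [pow_succ'] at this
  calc ‖fderiv ℝ (S.Fn (n+1)) x - fderiv ℝ (S.Fn n) x‖ ≤ S.C8 * (S.rat * S.rat ^ n) := this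
    _ = (S.C8 * S.rat) * S.rat ^ n := by ring

lemma cauchy_DFn {x : Ei} (hx : x ∈ S.dom) : CauchySeq (fun n => fderiv ℝ (S.Fn n) x) :=
  cauchySeq_of_le_geometric S.rat (S.C8 * S.rat) S.rat_lt_one (S.dist_DFn_succ hx)

lemma tendsto_DFn {x : Ei} (hx : x ∈ S.dom) :
    Tendsto (fun n => fderiv ℝ (S.Fn n) x) atTop (𝓝 (S.Glim x)) :=
  (S.cauchy_DFn hx).tendsto_limUnder

lemma dist_DFn_lim {x : Ei} (hx : x ∈ S.dom) (n : ℕ) :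
    dist (fderiv ℝ (S.Fn n) x) (S.Glim x) ≤ (S.C8 * S.rat) * S.rat ^ n / (1 - S.rat) :=
  dist_le_of_le_geometric_of_tendsto S.rat (S.C8 * S.rat) S.rat_lt_one
    (S.dist_DFn_succ hx) (S.tendsto_DFn hx) n

lemma hol_lim {x y : Ei} (hx : x ∈ S.dom) (hy : y ∈ S.dom) (n : ℕ) :
    ‖(fderiv ℝ (S.Fn n) x - S.Glim x) - (fderiv ℝ (S.Fn n) y - S.Glim y)‖
      ≤ ((S.C8 * S.rat) * ‖x - y‖ ^ S.α) * S.rat ^ n / (1 - S.rat) := by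
  have hstep : ∀ m : ℕ, dist (fderiv ℝ (S.Fn m) x - fderiv ℝ (S.Fn m) y)
      (fderiv ℝ (S.Fn (m+1)) x - fderiv ℝ (S.Fn (m+1)) y)
      ≤ ((S.C8 * S.rat) * ‖x - y‖ ^ S.α) * S.rat ^ m := by
    intro m
    rw [dist_eq_norm, norm_sub_rev]
    have h := ((S.stepAll m).2.2) x hx y hy
    rw [pow_succ'] at h
    calc ‖(fderiv ℝ (S.Fn (m+1)) x - fderiv ℝ (S.Fn (m+1)) y)
            - (fderiv ℝ (S.Fn m) x - fderiv ℝ (S.Fn m) y)‖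
        = ‖(fderiv ℝ (S.Fn (m+1)) x - fderiv ℝ (S.Fn m) x)
            - (fderiv ℝ (S.Fn (m+1)) y - fderiv ℝ (S.Fn m) y)‖ := by
          congr 1; abel
      _ ≤ S.C8 * (S.rat * S.rat ^ m) * ‖x - y‖ ^ S.α := h
      _ = ((S.C8 * S.rat) * ‖x - y‖ ^ S.α) * S.rat ^ m := by ring
  have htend : Tendsto (fun m => fderiv ℝ (S.Fn m) x - fderiv ℝ (S.Fn m) y) atTop
      (𝓝 (S.Glim x - S.Glim y)) := (S.tendsto_DFn hx).sub (S.tendsto_DFn hy)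
  have := dist_le_of_le_geometric_of_tendsto S.rat ((S.C8 * S.rat) * ‖x - y‖ ^ S.α)
    S.rat_lt_one hstep htend n
  rw [dist_eq_norm] at this
  calc ‖(fderiv ℝ (S.Fn n) x - S.Glim x) - (fderiv ℝ (S.Fn n) y - S.Glim y)‖
      = ‖(fderiv ℝ (S.Fn n) x - fderiv ℝ (S.Fn n) y) - (S.Glim x - S.Glim y)‖ := by
        congr 1; abel
    _ ≤ _ := this

lemma ebound_tendsto :
    Tendsto (fun n : ℕ => (S.C8 * S.rat) * S.rat ^ n / (1 - S.rat)) atTop (𝓝 0) := by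
  have h0 : Tendsto (fun n : ℕ => S.rat ^ n) atTop (𝓝 0) :=
    tendsto_pow_atTop_nhds_zero_of_lt_one S.rat_pos.le S.rat_lt_one
  have h1 := (h0.const_mul (S.C8 * S.rat)).div_const (1 - S.rat)
  simpa using h1

lemma fderiv_Flim {x : Ei} (hx : x ∈ S.dom) : fderiv ℝ S.Flim x = S.Glim x := by
  have huniform : TendstoUniformlyOn (fun n x => fderiv ℝ (S.Fn n) x) S.Glim atTop S.dom := by
    rw [Metric.tendstoUniformlyOn_iff]
    intro ε hε
    have := S.ebound_tendsto.eventually (gt_mem_nhds hε)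
    filter_upwards [this] with n hn x hx
    rw [dist_comm]
    exact lt_of_le_of_lt (S.dist_DFn_lim hx n) hn
  have hopen : IsOpen S.dom := isOpen_ball
  have key := hasFDerivAt_of_tendstoUniformlyOn hopen huniform
    (fun n x hx => (S.Fn_hasFDeriv n hx).differentiableAt.hasFDerivAt)
    (fun x hx => S.tendsto_Fn hx) hx
  exact key.fderiv

lemma limit : ∀ ε > (0:ℝ), ∃ N, ∀ n ≥ N, C1aDistLE S.α S.dom (S.Fn n) S.Flim ε := by
  intro ε hε
  have := S.ebound_tendsto.eventually (gt_mem_nhds hε)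
  obtain ⟨N, hN⟩ := eventually_atTop.1 this
  refine ⟨N, fun n hn => ⟨fun x hx => ?_, fun x hx => ?_, fun x hx y hy => ?_⟩⟩
  · have := S.dist_Fn_lim hx n
    rw [dist_eq_norm] at this
    exact this.trans (hN n hn).le
  · rw [S.fderiv_Flim hx]
    have := S.dist_DFn_lim hx n
    rw [dist_eq_norm] at this
    exact this.trans (hN n hn).le
  · rw [S.fderiv_Flim hx, S.fderiv_Flim hy]
    refine (S.hol_lim hx hy n).trans ?_
    have h1 : ((S.C8 * S.rat) * ‖x - y‖ ^ S.α) * S.rat ^ n / (1 - S.rat)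
        = ((S.C8 * S.rat) * S.rat ^ n / (1 - S.rat)) * ‖x - y‖ ^ S.α := by ring
    rw [h1]
    exact mul_le_mul_of_nonneg_right (hN n hn).le (Real.rpow_nonneg (norm_nonneg _) _)

end CG

/-- **Convergence of geometries** (Theorem 4.1): under hypotheses (H0)–(H3') — each `f i`
(`i ≥ 1`) is a `C^{1+α}` diffeomorphism of `B_ρ(0)` onto its image fixing `0`, with
`C^{1+α}` norm `< C`, derivative norms in `(μ', μ)` with `μ < 1`, derivative at the origin
equal to the invertible linear map `A i` with bunching
`‖A i‖·‖(A i)⁻¹‖ ≤ κ` and `κ·μ^α < 1` — the normalized compositions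
`F_n = (Df^n(0))⁻¹ ∘ f^n` converge in `C^{1+α}` on `B_ρ(0)`, with the uniformly
exponential rate `‖F_n − F_{n−1}‖_{C^{1+α}} ≤ C₈·(κ·μ^α)^n`. -/
theorem convergence_of_geometries
    (ρ C μ' μ α κ : ℝ) (hρ : 0 < ρ) (hC : 0 < C)
    (hμ'0 : 0 < μ') (hμ'μ : μ' < μ) (hμ1 : μ < 1)
    (hα0 : 0 < α) (hα1 : α < 1) (hκ1 : 1 ≤ κ) (hbunch : κ * μ ^ α < 1)
    (f : ℕ → EuclideanSpace ℝ (Fin d) → EuclideanSpace ℝ (Fin d))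
    (A : ℕ → EuclideanSpace ℝ (Fin d) ≃L[ℝ] EuclideanSpace ℝ (Fin d))
    (h0fix : ∀ i, 1 ≤ i → f i 0 = 0)
    (h0inj : ∀ i, 1 ≤ i → InjOn (f i) (ball 0 ρ))
    (h0diff : ∀ i, 1 ≤ i → ∀ x ∈ ball (0 : EuclideanSpace ℝ (Fin d)) ρ,
      DifferentiableAt ℝ (f i) x)
    (h1 : ∀ i, 1 ≤ i → ∀ x ∈ ball (0 : EuclideanSpace ℝ (Fin d)) ρ,
      ‖f i x‖ + ‖fderiv ℝ (f i) x‖ ≤ C)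
    (h1Hol : ∀ i, 1 ≤ i → ∀ x ∈ ball (0 : EuclideanSpace ℝ (Fin d)) ρ,
      ∀ y ∈ ball (0 : EuclideanSpace ℝ (Fin d)) ρ,
        ‖fderiv ℝ (f i) x - fderiv ℝ (f i) y‖ ≤ C * ‖x - y‖ ^ α)
    (h2 : ∀ i, 1 ≤ i → ∀ y ∈ ball (0 : EuclideanSpace ℝ (Fin d)) ρ,
      μ' < ‖fderiv ℝ (f i) y‖ ∧ ‖fderiv ℝ (f i) y‖ < μ)
    (hA : ∀ i, 1 ≤ i → fderiv ℝ (f i) 0 =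
      (A i : EuclideanSpace ℝ (Fin d) →L[ℝ] EuclideanSpace ℝ (Fin d)))
    (h3 : ∀ i, 1 ≤ i →
      ‖(A i : EuclideanSpace ℝ (Fin d) →L[ℝ] EuclideanSpace ℝ (Fin d))‖ *
        ‖((A i).symm : EuclideanSpace ℝ (Fin d) →L[ℝ] EuclideanSpace ℝ (Fin d))‖ ≤ κ) :
    ∃ C₈ > (0 : ℝ),
      (∀ n, 1 ≤ n →
        C1aDistLE α (ball 0 ρ)
          (fun x => (Lcomp A n).symm (comps f n x))
          (fun x => (Lcomp A (n - 1)).symm (comps f (n - 1) x))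
          (C₈ * (κ * μ ^ α) ^ n)) ∧
      ∃ F : EuclideanSpace ℝ (Fin d) → EuclideanSpace ℝ (Fin d),
        ∀ ε > (0 : ℝ), ∃ N, ∀ n ≥ N,
          C1aDistLE α (ball 0 ρ) (fun x => (Lcomp A n).symm (comps f n x)) F ε := by
  let S : CG d := ⟨ρ, C, μ', μ, α, κ, f, A, hρ, hC, hμ'0, hμ'μ, hμ1, hα0, hα1, hκ1, hbunch,
    h0fix, h0diff, h1Hol, h2, hA, h3⟩
  refine ⟨S.C8, S.C8_pos, fun n hn => ?_, S.Flim, fun ε hε => ?_⟩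
  · obtain ⟨m, rfl⟩ : ∃ m, n = m + 1 := ⟨n - 1, (Nat.succ_pred_eq_of_pos hn).symm⟩
    have h := S.stepAll m
    simp only [Nat.add_sub_cancel]
    exact h
  · obtain ⟨N, hN⟩ := S.limit ε hε
    exact ⟨N, fun n hn => hN n hn⟩

end
end

section
/- Under the hypotheses of the convergence of geometries theorem (sequence {f_i} of C^{1+α} contractions fixing 0 on B_ρ(0) with C^{1+α} norms bounded by C, derivative norms in (μ′, μ) with μ < 1, and bunching ‖Df_i(0)‖_op·‖(Df_i(0))⁻¹‖_op ≤ κ with κ·μ^α < 1), there exist ξ₀ > 0 and constants η₂ < 1 < η₁, depending only on the data (ρ, C, μ, μ′, α, κ, d), such that for every ξ ∈ (0, ξ₀] and every n, η₂·L_n(B_ξ(0)) ⊆ f^n(B_ξ(0)) ⊆ η₁·L_n(B_ξ(0)), where L_n = Df^n(0) and t·L_n(B_ξ(0)) denotes the image under L_n of B_{tξ}(0). -/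
open Metric Set

noncomputable section

variable {d : ℕ}

section Aux

variable {E : Type*} [NormedAddCommGroup E] [NormedSpace ℝ E]

private theorem norm_trans_le (e₁ e₂ : E ≃L[ℝ] E) :
    ‖((e₁.trans e₂ : E ≃L[ℝ] E) : E →L[ℝ] E)‖ ≤
      ‖(e₂ : E →L[ℝ] E)‖ * ‖(e₁ : E →L[ℝ] E)‖ := by
  rw [← ContinuousLinearEquiv.comp_coe]
  exact ContinuousLinearMap.opNorm_comp_le _ _

private theorem symm_trans_eq (e₁ e₂ : E ≃L[ℝ] E) :
    (e₁.trans e₂).symm = e₂.symm.trans e₁.symm := by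
  ext x
  simp [ContinuousLinearEquiv.symm_trans_apply, ContinuousLinearEquiv.trans_apply]

private theorem norm_equiv_apply_le (e : E ≃L[ℝ] E) (x : E) :
    ‖e x‖ ≤ ‖(e : E →L[ℝ] E)‖ * ‖x‖ :=
  (e : E →L[ℝ] E).le_opNorm x

end Aux

private theorem Lcomp_succ {d : ℕ}
    (A : ℕ → EuclideanSpace ℝ (Fin d) ≃L[ℝ] EuclideanSpace ℝ (Fin d)) (n : ℕ) :
    Lcomp A (n + 1) = (Lcomp A n).trans (A (n + 1)) := rfl

private theorem comps_succ {d : ℕ}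
    (f : ℕ → EuclideanSpace ℝ (Fin d) → EuclideanSpace ℝ (Fin d)) (n : ℕ)
    (x : EuclideanSpace ℝ (Fin d)) :
    comps f (n + 1) x = f (n + 1) (comps f n x) := rfl

set_option maxHeartbeats 1000000 in
/-- **Control of shape** (Corollary 4.2): with constants depending only on the data
`(ρ, C, μ', μ, α, κ, d)`, there are `ξ₀ > 0` and `η₂ < 1 < η₁` such that for every
sequence `{f i}` satisfying (H0)–(H3') (with derivative at `0` given by the invertible
map `A i`), every `ξ ∈ (0, ξ₀]` and every `n`,
`η₂·L_n(B_ξ(0)) ⊆ f^n(B_ξ(0)) ⊆ η₁·L_n(B_ξ(0))`, where `L_n = Df^n(0) = A n ∘ ⋯ ∘ A 1`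
and `t·L_n(B_ξ(0)) = L_n(B_{tξ}(0))`. -/
theorem control_of_shape
    (d : ℕ) (ρ C μ' μ α κ : ℝ) (hρ : 0 < ρ) (hC : 0 < C)
    (hμ'0 : 0 < μ') (hμ'μ : μ' < μ) (hμ1 : μ < 1)
    (hα0 : 0 < α) (hα1 : α < 1) (hκ1 : 1 ≤ κ) (hbunch : κ * μ ^ α < 1) :
    ∃ ξ₀ η₁ η₂ : ℝ, 0 < ξ₀ ∧ 1 < η₁ ∧ 0 < η₂ ∧ η₂ < 1 ∧
      ∀ (f : ℕ → EuclideanSpace ℝ (Fin d) → EuclideanSpace ℝ (Fin d))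
        (A : ℕ → EuclideanSpace ℝ (Fin d) ≃L[ℝ] EuclideanSpace ℝ (Fin d)),
        (∀ i, 1 ≤ i → f i 0 = 0) →
        (∀ i, 1 ≤ i → InjOn (f i) (ball 0 ρ)) →
        (∀ i, 1 ≤ i → ∀ x ∈ ball (0 : EuclideanSpace ℝ (Fin d)) ρ,
          DifferentiableAt ℝ (f i) x) →
        (∀ i, 1 ≤ i → ∀ x ∈ ball (0 : EuclideanSpace ℝ (Fin d)) ρ,
          ‖f i x‖ + ‖fderiv ℝ (f i) x‖ ≤ C) →
        (∀ i, 1 ≤ i → ∀ x ∈ ball (0 : EuclideanSpace ℝ (Fin d)) ρ,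
          ∀ y ∈ ball (0 : EuclideanSpace ℝ (Fin d)) ρ,
            ‖fderiv ℝ (f i) x - fderiv ℝ (f i) y‖ ≤ C * ‖x - y‖ ^ α) →
        (∀ i, 1 ≤ i → ∀ y ∈ ball (0 : EuclideanSpace ℝ (Fin d)) ρ,
          μ' < ‖fderiv ℝ (f i) y‖ ∧ ‖fderiv ℝ (f i) y‖ < μ) →
        (∀ i, 1 ≤ i → fderiv ℝ (f i) 0 =
          (A i : EuclideanSpace ℝ (Fin d) →L[ℝ] EuclideanSpace ℝ (Fin d))) →
        (∀ i, 1 ≤ i →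
          ‖(A i : EuclideanSpace ℝ (Fin d) →L[ℝ] EuclideanSpace ℝ (Fin d))‖ *
            ‖((A i).symm : EuclideanSpace ℝ (Fin d) →L[ℝ] EuclideanSpace ℝ (Fin d))‖ ≤ κ) →
        ∀ ξ : ℝ, 0 < ξ → ξ ≤ ξ₀ → ∀ n : ℕ,
          (Lcomp A n) '' ball 0 (η₂ * ξ) ⊆ comps f n '' ball 0 ξ ∧
          comps f n '' ball 0 ξ ⊆ (Lcomp A n) '' ball 0 (η₁ * ξ) := by
  have hμ0 : 0 < μ := hμ'0.trans hμ'μ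
  have hκ0 : 0 < κ := lt_of_lt_of_le one_pos hκ1
  set β : ℝ := κ * μ ^ α with hβdef
  have hβ0 : 0 < β := mul_pos hκ0 (Real.rpow_pos_of_pos hμ0 α)
  have hβ1 : β < 1 := hbunch
  have h1β : 0 < 1 - β := by linarith
  have hK0 : 0 < C * κ / μ' := by positivity
  -- choose the constants
  have hcons : ∃ ξ₀ E : ℝ, 0 < ξ₀ ∧ 0 < E ∧ ξ₀ ≤ ρ / 4 ∧
      (C * κ / μ') * (2 * ξ₀) ^ α ≤ E ∧ E ≤ (1 - β) / 4 := by
    set r₁ : ℝ := ((1 - β) / (4 * (C * κ / μ'))) ^ (α⁻¹) with hr₁def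
    have hq0 : (0:ℝ) < (1 - β) / (4 * (C * κ / μ')) := by positivity
    have hr₁0 : 0 < r₁ := Real.rpow_pos_of_pos hq0 _
    refine ⟨min (ρ / 4) (r₁ / 2), (1 - β) / 4, ?_, by positivity, min_le_left _ _, ?_, le_refl _⟩
    · have : (0:ℝ) < ρ / 4 := by linarith
      positivity
    · have h2 : 2 * min (ρ / 4) (r₁ / 2) ≤ r₁ := by
        have := min_le_right (ρ / 4) (r₁ / 2); linarith
      have h3 : (0:ℝ) ≤ 2 * min (ρ / 4) (r₁ / 2) := by
        have h4 : (0:ℝ) < min (ρ / 4) (r₁ / 2) := lt_min (by linarith) (by linarith)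
        linarith
      have h5 : (2 * min (ρ / 4) (r₁ / 2)) ^ α ≤ r₁ ^ α :=
        Real.rpow_le_rpow h3 h2 hα0.le
      have h6 : r₁ ^ α = (1 - β) / (4 * (C * κ / μ')) := by
        rw [hr₁def, Real.rpow_inv_rpow hq0.le hα0.ne']
      calc (C * κ / μ') * (2 * min (ρ / 4) (r₁ / 2)) ^ α
          ≤ (C * κ / μ') * ((1 - β) / (4 * (C * κ / μ'))) := by
            rw [← h6]; exact mul_le_mul_of_nonneg_left h5 hK0.le
        _ = (1 - β) / 4 := by field_simp
  obtain ⟨ξ₀, E, hξ₀0, hE0, hξ₀ρ, hKE, hE4⟩ := hcons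
  have hDq : (2 * E) / (1 - β) ≤ 1 / 2 := by
    rw [div_le_iff₀ h1β]; linarith
  have hDq0 : 0 < (2 * E) / (1 - β) := by positivity
  refine ⟨ξ₀, 1 + (2 * E) / (1 - β), 1 - (2 * E) / (1 - β), hξ₀0, by linarith, by linarith,
    by linarith, ?_⟩
  intro f A h1 h2 h3 h4 h5 h6 h7 h8 ξ hξ0 hξle n
  rcases subsingleton_or_nontrivial (EuclideanSpace ℝ (Fin d)) with hss | hnt
  · constructor
    · intro z _
      exact ⟨0, mem_ball_self hξ0, Subsingleton.elim _ z⟩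
    · intro z _
      refine ⟨0, mem_ball_self ?_, Subsingleton.elim _ z⟩
      have : (0:ℝ) < 1 + (2 * E) / (1 - β) := by linarith
      positivity
  -- nontrivial case
  have hξρ : 2 * ξ ≤ ρ / 2 := by
    have := hξle.trans hξ₀ρ; linarith
  -- norm bounds on the `A i`
  have hAn : ∀ i, 1 ≤ i →
      ‖(A i : EuclideanSpace ℝ (Fin d) →L[ℝ] EuclideanSpace ℝ (Fin d))‖ ≤ μ := by
    intro i hi
    have := (h6 i hi 0 (mem_ball_self hρ)).2
    rw [h7 i hi] at this
    exact this.le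
  have hAn' : ∀ i, 1 ≤ i →
      μ' < ‖(A i : EuclideanSpace ℝ (Fin d) →L[ℝ] EuclideanSpace ℝ (Fin d))‖ := by
    intro i hi
    have := (h6 i hi 0 (mem_ball_self hρ)).1
    rwa [h7 i hi] at this
  have hAinv : ∀ i, 1 ≤ i →
      ‖((A i).symm : EuclideanSpace ℝ (Fin d) →L[ℝ] EuclideanSpace ℝ (Fin d))‖ ≤ κ / μ' := by
    intro i hi
    rw [le_div_iff₀ hμ'0]
    calc ‖((A i).symm : EuclideanSpace ℝ (Fin d) →L[ℝ] EuclideanSpace ℝ (Fin d))‖ * μ'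
        ≤ ‖((A i).symm : EuclideanSpace ℝ (Fin d) →L[ℝ] EuclideanSpace ℝ (Fin d))‖ *
          ‖(A i : EuclideanSpace ℝ (Fin d) →L[ℝ] EuclideanSpace ℝ (Fin d))‖ :=
          mul_le_mul_of_nonneg_left (hAn' i hi).le (norm_nonneg _)
      _ ≤ κ := by rw [mul_comm]; exact h8 i hi
  -- norms of the compositions
  have hLn : ∀ m : ℕ,
      ‖((Lcomp A m : EuclideanSpace ℝ (Fin d) ≃L[ℝ] EuclideanSpace ℝ (Fin d)) :
        EuclideanSpace ℝ (Fin d) →L[ℝ] EuclideanSpace ℝ (Fin d))‖ ≤ μ ^ m := by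
    intro m
    induction m with
    | zero =>
      simpa [Lcomp, ContinuousLinearEquiv.coe_refl] using
        (ContinuousLinearMap.norm_id_le (E := EuclideanSpace ℝ (Fin d)))
    | succ m ih =>
      rw [Lcomp_succ]
      refine (norm_trans_le _ _).trans ?_
      calc ‖(A (m+1) : EuclideanSpace ℝ (Fin d) →L[ℝ] EuclideanSpace ℝ (Fin d))‖ *
            ‖((Lcomp A m : EuclideanSpace ℝ (Fin d) ≃L[ℝ] EuclideanSpace ℝ (Fin d)) :
              EuclideanSpace ℝ (Fin d) →L[ℝ] EuclideanSpace ℝ (Fin d))‖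
          ≤ μ * μ ^ m :=
            mul_le_mul (hAn (m+1) (Nat.le_add_left 1 m)) ih (norm_nonneg _) hμ0.le
        _ = μ ^ (m+1) := by ring
  have hcond : ∀ m : ℕ,
      ‖(((Lcomp A m).symm : EuclideanSpace ℝ (Fin d) ≃L[ℝ] EuclideanSpace ℝ (Fin d)) :
        EuclideanSpace ℝ (Fin d) →L[ℝ] EuclideanSpace ℝ (Fin d))‖ *
      ‖((Lcomp A m : EuclideanSpace ℝ (Fin d) ≃L[ℝ] EuclideanSpace ℝ (Fin d)) :
        EuclideanSpace ℝ (Fin d) →L[ℝ] EuclideanSpace ℝ (Fin d))‖ ≤ κ ^ m := by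
    intro m
    induction m with
    | zero =>
      have hid : ‖(((Lcomp A 0).symm : EuclideanSpace ℝ (Fin d) ≃L[ℝ]
          EuclideanSpace ℝ (Fin d)) : EuclideanSpace ℝ (Fin d) →L[ℝ]
          EuclideanSpace ℝ (Fin d))‖ ≤ 1 := by
        simpa [Lcomp, ContinuousLinearEquiv.refl_symm, ContinuousLinearEquiv.coe_refl] using
          (ContinuousLinearMap.norm_id_le (E := EuclideanSpace ℝ (Fin d)))
      have hid2 : ‖((Lcomp A 0 : EuclideanSpace ℝ (Fin d) ≃L[ℝ]
          EuclideanSpace ℝ (Fin d)) : EuclideanSpace ℝ (Fin d) →L[ℝ]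
          EuclideanSpace ℝ (Fin d))‖ ≤ 1 := by
        simpa [Lcomp, ContinuousLinearEquiv.coe_refl] using
          (ContinuousLinearMap.norm_id_le (E := EuclideanSpace ℝ (Fin d)))
      have n1 := norm_nonneg (((Lcomp A 0).symm : EuclideanSpace ℝ (Fin d) ≃L[ℝ]
          EuclideanSpace ℝ (Fin d)) : EuclideanSpace ℝ (Fin d) →L[ℝ] EuclideanSpace ℝ (Fin d))
      have n2 := norm_nonneg ((Lcomp A 0 : EuclideanSpace ℝ (Fin d) ≃L[ℝ]
          EuclideanSpace ℝ (Fin d)) : EuclideanSpace ℝ (Fin d) →L[ℝ] EuclideanSpace ℝ (Fin d))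
      simpa using mul_le_mul hid hid2 n2 zero_le_one
    | succ m ih =>
      have hb1 : ‖((Lcomp A (m+1) : EuclideanSpace ℝ (Fin d) ≃L[ℝ] EuclideanSpace ℝ (Fin d)) :
          EuclideanSpace ℝ (Fin d) →L[ℝ] EuclideanSpace ℝ (Fin d))‖ ≤
          ‖(A (m+1) : EuclideanSpace ℝ (Fin d) →L[ℝ] EuclideanSpace ℝ (Fin d))‖ *
          ‖((Lcomp A m : EuclideanSpace ℝ (Fin d) ≃L[ℝ] EuclideanSpace ℝ (Fin d)) :
            EuclideanSpace ℝ (Fin d) →L[ℝ] EuclideanSpace ℝ (Fin d))‖ := by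
        rw [Lcomp_succ]; exact norm_trans_le _ _
      have hb2 : ‖(((Lcomp A (m+1)).symm : EuclideanSpace ℝ (Fin d) ≃L[ℝ]
          EuclideanSpace ℝ (Fin d)) : EuclideanSpace ℝ (Fin d) →L[ℝ]
          EuclideanSpace ℝ (Fin d))‖ ≤
          ‖(((Lcomp A m).symm : EuclideanSpace ℝ (Fin d) ≃L[ℝ] EuclideanSpace ℝ (Fin d)) :
            EuclideanSpace ℝ (Fin d) →L[ℝ] EuclideanSpace ℝ (Fin d))‖ *
          ‖((A (m+1)).symm : EuclideanSpace ℝ (Fin d) →L[ℝ] EuclideanSpace ℝ (Fin d))‖ := by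
        rw [Lcomp_succ, symm_trans_eq]
        exact norm_trans_le _ _
      calc ‖(((Lcomp A (m+1)).symm : EuclideanSpace ℝ (Fin d) ≃L[ℝ]
            EuclideanSpace ℝ (Fin d)) : EuclideanSpace ℝ (Fin d) →L[ℝ]
            EuclideanSpace ℝ (Fin d))‖ *
          ‖((Lcomp A (m+1) : EuclideanSpace ℝ (Fin d) ≃L[ℝ] EuclideanSpace ℝ (Fin d)) :
            EuclideanSpace ℝ (Fin d) →L[ℝ] EuclideanSpace ℝ (Fin d))‖
          ≤ (‖(((Lcomp A m).symm : EuclideanSpace ℝ (Fin d) ≃L[ℝ]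
              EuclideanSpace ℝ (Fin d)) : EuclideanSpace ℝ (Fin d) →L[ℝ]
              EuclideanSpace ℝ (Fin d))‖ *
            ‖((A (m+1)).symm : EuclideanSpace ℝ (Fin d) →L[ℝ] EuclideanSpace ℝ (Fin d))‖) *
            (‖(A (m+1) : EuclideanSpace ℝ (Fin d) →L[ℝ] EuclideanSpace ℝ (Fin d))‖ *
            ‖((Lcomp A m : EuclideanSpace ℝ (Fin d) ≃L[ℝ] EuclideanSpace ℝ (Fin d)) :
              EuclideanSpace ℝ (Fin d) →L[ℝ] EuclideanSpace ℝ (Fin d))‖) :=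
            mul_le_mul hb2 hb1 (norm_nonneg _) (by positivity)
        _ = (‖(A (m+1) : EuclideanSpace ℝ (Fin d) →L[ℝ] EuclideanSpace ℝ (Fin d))‖ *
            ‖((A (m+1)).symm : EuclideanSpace ℝ (Fin d) →L[ℝ] EuclideanSpace ℝ (Fin d))‖) *
            (‖(((Lcomp A m).symm : EuclideanSpace ℝ (Fin d) ≃L[ℝ]
              EuclideanSpace ℝ (Fin d)) : EuclideanSpace ℝ (Fin d) →L[ℝ]
              EuclideanSpace ℝ (Fin d))‖ *
            ‖((Lcomp A m : EuclideanSpace ℝ (Fin d) ≃L[ℝ] EuclideanSpace ℝ (Fin d)) :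
              EuclideanSpace ℝ (Fin d) →L[ℝ] EuclideanSpace ℝ (Fin d))‖) := by ring
        _ ≤ κ * κ ^ m :=
            mul_le_mul (h8 (m+1) (Nat.le_add_left 1 m)) ih (by positivity) hκ0.le
        _ = κ ^ (m+1) := by ring
  have hm1 : ∀ m : ℕ, 1 ≤ m + 1 := fun m => Nat.le_add_left 1 m
  have hpow1 : ∀ m : ℕ, μ ^ m ≤ 1 := fun m => pow_le_one₀ hμ0.le hμ1.le
  have hβpow1 : ∀ m : ℕ, β ^ m ≤ 1 := fun m => pow_le_one₀ hβ0.le hβ1.le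
  have hE14 : E ≤ 1/4 := by nlinarith
  -- the key approximation estimate
  have key : ∀ m : ℕ, ApproximatesLinearOn
      (fun y => (Lcomp A (m+1)).symm (f (m+1) ((Lcomp A m) y)))
      ((ContinuousLinearEquiv.refl ℝ (EuclideanSpace ℝ (Fin d) )) :
        EuclideanSpace ℝ (Fin d) →L[ℝ] EuclideanSpace ℝ (Fin d))
      (closedBall 0 (2*ξ)) (E * β^m).toNNReal := by
    intro m x hx y hy
    have hεm0 : (0:ℝ) ≤ E * β^m := by positivity
    show ‖(Lcomp A (m+1)).symm (f (m+1) ((Lcomp A m) x)) -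
        (Lcomp A (m+1)).symm (f (m+1) ((Lcomp A m) y)) - (x - y)‖ ≤
        ((E * β^m).toNNReal : ℝ) * ‖x - y‖
    rw [Real.coe_toNNReal _ hεm0]
    have hxn : ‖x‖ ≤ 2*ξ := by rwa [mem_closedBall_zero_iff] at hx
    have hyn : ‖y‖ ≤ 2*ξ := by rwa [mem_closedBall_zero_iff] at hy
    have hunorm : ‖(Lcomp A m) x‖ ≤ μ^m * (2*ξ) :=
      (norm_equiv_apply_le (Lcomp A m) x).trans
        (mul_le_mul (hLn m) hxn (norm_nonneg x) (by positivity))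
    have hvnorm : ‖(Lcomp A m) y‖ ≤ μ^m * (2*ξ) :=
      (norm_equiv_apply_le (Lcomp A m) y).trans
        (mul_le_mul (hLn m) hyn (norm_nonneg y) (by positivity))
    have hsball : closedBall (0 : EuclideanSpace ℝ (Fin d)) (μ^m*(2*ξ)) ⊆ ball 0 ρ := by
      apply closedBall_subset_ball
      nlinarith [hpow1 m, hξ0, hμ0, pow_nonneg hμ0.le m]
    have hdiff : ∀ z ∈ closedBall (0 : EuclideanSpace ℝ (Fin d)) (μ^m*(2*ξ)),
        DifferentiableAt ℝ (fun w => f (m+1) w -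
          (A (m+1) : EuclideanSpace ℝ (Fin d) →L[ℝ] EuclideanSpace ℝ (Fin d)) w) z :=
      fun z hz => (h3 (m+1) (hm1 m) z (hsball hz)).sub
        ((A (m+1) : EuclideanSpace ℝ (Fin d) →L[ℝ] EuclideanSpace ℝ (Fin d)).differentiableAt)
    have hbound : ∀ z ∈ closedBall (0 : EuclideanSpace ℝ (Fin d)) (μ^m*(2*ξ)),
        ‖fderiv ℝ (fun w => f (m+1) w -
          (A (m+1) : EuclideanSpace ℝ (Fin d) →L[ℝ] EuclideanSpace ℝ (Fin d)) w) z‖ ≤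
          C * (μ^m*(2*ξ))^α := by
      intro z hz
      have hzρ : z ∈ ball (0 : EuclideanSpace ℝ (Fin d)) ρ := hsball hz
      rw [fderiv_fun_sub (h3 (m+1) (hm1 m) z hzρ)
        ((A (m+1) : EuclideanSpace ℝ (Fin d) →L[ℝ] EuclideanSpace ℝ (Fin d)).differentiableAt),
        ContinuousLinearMap.fderiv, ← h7 (m+1) (hm1 m)]
      refine (h5 (m+1) (hm1 m) z hzρ 0 (mem_ball_self hρ)).trans ?_
      have hzn : ‖z - 0‖ ≤ μ^m*(2*ξ) := by
        rw [sub_zero]; rwa [mem_closedBall_zero_iff] at hz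
      exact mul_le_mul_of_nonneg_left
        (Real.rpow_le_rpow (norm_nonneg _) hzn hα0.le) hC.le
    have hMVT : ‖(f (m+1) ((Lcomp A m) x) -
          (A (m+1) : EuclideanSpace ℝ (Fin d) →L[ℝ] EuclideanSpace ℝ (Fin d))
            ((Lcomp A m) x)) -
        (f (m+1) ((Lcomp A m) y) -
          (A (m+1) : EuclideanSpace ℝ (Fin d) →L[ℝ] EuclideanSpace ℝ (Fin d))
            ((Lcomp A m) y))‖ ≤
        C * (μ^m*(2*ξ))^α * ‖(Lcomp A m) x - (Lcomp A m) y‖ :=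
      (convex_closedBall _ _).norm_image_sub_le_of_norm_fderiv_le hdiff hbound
        (mem_closedBall_zero_iff.2 hvnorm) (mem_closedBall_zero_iff.2 hunorm)
    have hxid : (Lcomp A (m+1)).symm ((A (m+1)) ((Lcomp A m) x)) = x := by
      have h : (A (m+1)) ((Lcomp A m) x) = (Lcomp A (m+1)) x := rfl
      rw [h, ContinuousLinearEquiv.symm_apply_apply]
    have hyid : (Lcomp A (m+1)).symm ((A (m+1)) ((Lcomp A m) y)) = y := by
      have h : (A (m+1)) ((Lcomp A m) y) = (Lcomp A (m+1)) y := rfl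
      rw [h, ContinuousLinearEquiv.symm_apply_apply]
    have hid : (Lcomp A (m+1)).symm (f (m+1) ((Lcomp A m) x)) -
        (Lcomp A (m+1)).symm (f (m+1) ((Lcomp A m) y)) - (x - y) =
        (Lcomp A (m+1)).symm ((f (m+1) ((Lcomp A m) x) -
          (A (m+1) : EuclideanSpace ℝ (Fin d) →L[ℝ] EuclideanSpace ℝ (Fin d))
            ((Lcomp A m) x)) -
        (f (m+1) ((Lcomp A m) y) -
          (A (m+1) : EuclideanSpace ℝ (Fin d) →L[ℝ] EuclideanSpace ℝ (Fin d))
            ((Lcomp A m) y))) := by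
      rw [map_sub, map_sub, map_sub]
      simp only [ContinuousLinearEquiv.coe_coe]
      rw [hxid, hyid]
      abel
    rw [hid]
    have huv : ‖(Lcomp A m) x - (Lcomp A m) y‖ ≤
        ‖((Lcomp A m : EuclideanSpace ℝ (Fin d) ≃L[ℝ] EuclideanSpace ℝ (Fin d)) :
          EuclideanSpace ℝ (Fin d) →L[ℝ] EuclideanSpace ℝ (Fin d))‖ * ‖x - y‖ := by
      rw [← map_sub]
      exact norm_equiv_apply_le _ _
    have hs1 : ‖(((Lcomp A (m+1)).symm : EuclideanSpace ℝ (Fin d) ≃L[ℝ]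
          EuclideanSpace ℝ (Fin d)) : EuclideanSpace ℝ (Fin d) →L[ℝ]
          EuclideanSpace ℝ (Fin d))‖ *
        ‖((Lcomp A m : EuclideanSpace ℝ (Fin d) ≃L[ℝ] EuclideanSpace ℝ (Fin d)) :
          EuclideanSpace ℝ (Fin d) →L[ℝ] EuclideanSpace ℝ (Fin d))‖ ≤ (κ/μ') * κ^m := by
      have hb2 : ‖(((Lcomp A (m+1)).symm : EuclideanSpace ℝ (Fin d) ≃L[ℝ]
          EuclideanSpace ℝ (Fin d)) : EuclideanSpace ℝ (Fin d) →L[ℝ]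
          EuclideanSpace ℝ (Fin d))‖ ≤
          ‖(((Lcomp A m).symm : EuclideanSpace ℝ (Fin d) ≃L[ℝ] EuclideanSpace ℝ (Fin d)) :
            EuclideanSpace ℝ (Fin d) →L[ℝ] EuclideanSpace ℝ (Fin d))‖ *
          ‖((A (m+1)).symm : EuclideanSpace ℝ (Fin d) →L[ℝ] EuclideanSpace ℝ (Fin d))‖ := by
        rw [Lcomp_succ, symm_trans_eq]
        exact norm_trans_le _ _
      calc ‖(((Lcomp A (m+1)).symm : EuclideanSpace ℝ (Fin d) ≃L[ℝ]
            EuclideanSpace ℝ (Fin d)) : EuclideanSpace ℝ (Fin d) →L[ℝ]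
            EuclideanSpace ℝ (Fin d))‖ *
          ‖((Lcomp A m : EuclideanSpace ℝ (Fin d) ≃L[ℝ] EuclideanSpace ℝ (Fin d)) :
            EuclideanSpace ℝ (Fin d) →L[ℝ] EuclideanSpace ℝ (Fin d))‖
          ≤ (‖(((Lcomp A m).symm : EuclideanSpace ℝ (Fin d) ≃L[ℝ]
              EuclideanSpace ℝ (Fin d)) : EuclideanSpace ℝ (Fin d) →L[ℝ]
              EuclideanSpace ℝ (Fin d))‖ *
            ‖((A (m+1)).symm : EuclideanSpace ℝ (Fin d) →L[ℝ] EuclideanSpace ℝ (Fin d))‖) *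
            ‖((Lcomp A m : EuclideanSpace ℝ (Fin d) ≃L[ℝ] EuclideanSpace ℝ (Fin d)) :
              EuclideanSpace ℝ (Fin d) →L[ℝ] EuclideanSpace ℝ (Fin d))‖ :=
            mul_le_mul_of_nonneg_right hb2 (norm_nonneg _)
        _ = (‖(((Lcomp A m).symm : EuclideanSpace ℝ (Fin d) ≃L[ℝ]
              EuclideanSpace ℝ (Fin d)) : EuclideanSpace ℝ (Fin d) →L[ℝ]
              EuclideanSpace ℝ (Fin d))‖ *
            ‖((Lcomp A m : EuclideanSpace ℝ (Fin d) ≃L[ℝ] EuclideanSpace ℝ (Fin d)) :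
              EuclideanSpace ℝ (Fin d) →L[ℝ] EuclideanSpace ℝ (Fin d))‖) *
            ‖((A (m+1)).symm : EuclideanSpace ℝ (Fin d) →L[ℝ] EuclideanSpace ℝ (Fin d))‖ := by
            ring
        _ ≤ κ^m * (κ/μ') :=
            mul_le_mul (hcond m) (hAinv (m+1) (hm1 m)) (norm_nonneg _)
              (pow_nonneg hκ0.le m)
        _ = (κ/μ') * κ^m := by ring
    have hs2 : C * (μ^m*(2*ξ))^α ≤ C * ((μ^α)^m * (2*ξ₀)^α) := by
      have hμmα : (μ^m : ℝ)^α = (μ^α)^m := by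
        rw [← Real.rpow_natCast μ m, ← Real.rpow_natCast (μ^α) m,
          ← Real.rpow_mul hμ0.le, ← Real.rpow_mul hμ0.le, mul_comm]
      rw [Real.mul_rpow (by positivity) (by positivity), hμmα]
      have h2ξ : (2*ξ)^α ≤ (2*ξ₀)^α :=
        Real.rpow_le_rpow (by positivity) (by linarith) hα0.le
      exact mul_le_mul_of_nonneg_left
        (mul_le_mul_of_nonneg_left h2ξ (by positivity)) hC.le
    calc ‖(Lcomp A (m+1)).symm ((f (m+1) ((Lcomp A m) x) -
            (A (m+1) : EuclideanSpace ℝ (Fin d) →L[ℝ] EuclideanSpace ℝ (Fin d))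
              ((Lcomp A m) x)) -
          (f (m+1) ((Lcomp A m) y) -
            (A (m+1) : EuclideanSpace ℝ (Fin d) →L[ℝ] EuclideanSpace ℝ (Fin d))
              ((Lcomp A m) y)))‖
        ≤ ‖(((Lcomp A (m+1)).symm : EuclideanSpace ℝ (Fin d) ≃L[ℝ]
            EuclideanSpace ℝ (Fin d)) : EuclideanSpace ℝ (Fin d) →L[ℝ]
            EuclideanSpace ℝ (Fin d))‖ *
          ‖(f (m+1) ((Lcomp A m) x) -
            (A (m+1) : EuclideanSpace ℝ (Fin d) →L[ℝ] EuclideanSpace ℝ (Fin d))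
              ((Lcomp A m) x)) -
          (f (m+1) ((Lcomp A m) y) -
            (A (m+1) : EuclideanSpace ℝ (Fin d) →L[ℝ] EuclideanSpace ℝ (Fin d))
              ((Lcomp A m) y))‖ := norm_equiv_apply_le _ _
      _ ≤ ‖(((Lcomp A (m+1)).symm : EuclideanSpace ℝ (Fin d) ≃L[ℝ]
            EuclideanSpace ℝ (Fin d)) : EuclideanSpace ℝ (Fin d) →L[ℝ]
            EuclideanSpace ℝ (Fin d))‖ *
          (C * (μ^m*(2*ξ))^α * ‖(Lcomp A m) x - (Lcomp A m) y‖) :=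
          mul_le_mul_of_nonneg_left hMVT (norm_nonneg _)
      _ ≤ ‖(((Lcomp A (m+1)).symm : EuclideanSpace ℝ (Fin d) ≃L[ℝ]
            EuclideanSpace ℝ (Fin d)) : EuclideanSpace ℝ (Fin d) →L[ℝ]
            EuclideanSpace ℝ (Fin d))‖ *
          (C * (μ^m*(2*ξ))^α *
            (‖((Lcomp A m : EuclideanSpace ℝ (Fin d) ≃L[ℝ] EuclideanSpace ℝ (Fin d)) :
              EuclideanSpace ℝ (Fin d) →L[ℝ] EuclideanSpace ℝ (Fin d))‖ * ‖x - y‖)) := by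
          apply mul_le_mul_of_nonneg_left _ (norm_nonneg _)
          exact mul_le_mul_of_nonneg_left huv (by positivity)
      _ = (‖(((Lcomp A (m+1)).symm : EuclideanSpace ℝ (Fin d) ≃L[ℝ]
            EuclideanSpace ℝ (Fin d)) : EuclideanSpace ℝ (Fin d) →L[ℝ]
            EuclideanSpace ℝ (Fin d))‖ *
          ‖((Lcomp A m : EuclideanSpace ℝ (Fin d) ≃L[ℝ] EuclideanSpace ℝ (Fin d)) :
            EuclideanSpace ℝ (Fin d) →L[ℝ] EuclideanSpace ℝ (Fin d))‖) *
          (C * (μ^m*(2*ξ))^α) * ‖x - y‖ := by ring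
      _ ≤ ((κ/μ') * κ^m) * (C * ((μ^α)^m * (2*ξ₀)^α)) * ‖x - y‖ := by
          apply mul_le_mul_of_nonneg_right _ (norm_nonneg _)
          exact mul_le_mul hs1 hs2 (by positivity) (by positivity)
      _ ≤ E * β^m * ‖x - y‖ := by
          apply mul_le_mul_of_nonneg_right _ (norm_nonneg _)
          have heq : ((κ/μ') * κ^m) * (C * ((μ^α)^m * (2*ξ₀)^α)) =
              ((C * κ / μ') * (2*ξ₀)^α) * β^m := by
            rw [hβdef, mul_pow]; ring
          rw [heq]
          exact mul_le_mul_of_nonneg_right hKE (by positivity)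
  -- geometric sums
  set S : ℕ → ℝ := fun k => ∑ j ∈ Finset.range k, β ^ j with hSdef
  have hS0 : ∀ k, 0 ≤ S k := fun k => Finset.sum_nonneg fun j _ => by positivity
  have hSsucc : ∀ k, S (k+1) = S k + β^k := fun k => Finset.sum_range_succ _ _
  have hSle : ∀ k, S k ≤ 1/(1-β) := by
    intro k
    induction k with
    | zero => simpa [hSdef] using (one_div_pos.2 h1β).le
    | succ k ih =>
      have hrec : S (k+1) = β * S k + 1 := geom_sum_succ
      have he : 1/(1-β) = 1 + β*(1/(1-β)) := by field_simp; ring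
      have := mul_le_mul_of_nonneg_left ih hβ0.le
      rw [hrec]; linarith
  have hDS : ∀ k, 2*E*S k ≤ 1/2 := by
    intro k
    calc 2*E*S k ≤ 2*E*(1/(1-β)) :=
          mul_le_mul_of_nonneg_left (hSle k) (by positivity)
      _ = 2*E/(1-β) := by ring
      _ ≤ 1/2 := by linarith [hDq]
  have hg0 : ∀ m : ℕ, (Lcomp A (m+1)).symm (f (m+1) ((Lcomp A m) 0)) = 0 := by
    intro m
    rw [map_zero, h1 (m+1) (hm1 m), map_zero]
  -- the main induction
  haveI := hnt
  have main : ∀ m : ℕ,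
      ((Lcomp A m) '' ball 0 ((1 - 2*E*S m) * ξ) ⊆ comps f m '' ball 0 ξ) ∧
      (comps f m '' ball 0 ξ ⊆ (Lcomp A m) '' ball 0 ((1 + 2*E*S m) * ξ)) := by
    intro m
    induction m with
    | zero =>
      constructor
      · intro z hz
        simp only [Lcomp, ContinuousLinearEquiv.coe_refl', Set.image_id, hSdef] at hz ⊢
        simpa [comps] using (by simpa using hz : z ∈ ball (0 : EuclideanSpace ℝ (Fin d)) ξ)
      · intro z hz
        simp only [comps, Set.image_id] at hz
        simp only [Lcomp, ContinuousLinearEquiv.coe_refl', Set.image_id, hSdef]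
        simpa using hz
    | succ m ih =>
      have hεm0 : (0:ℝ) ≤ E * β^m := by positivity
      have hεmE : E * β^m ≤ E := by
        nlinarith [hβpow1 m, hE0]
      have hεm1 : E * β^m < 1 := by linarith [hE14]
      have hτ32 : 1 + 2*E*S m ≤ 3/2 := by linarith [hDS m]
      constructor
      · -- lower inclusion
        rintro z ⟨w, hwb, rfl⟩
        have hwn : ‖w‖ < (1 - 2*E*S (m+1))*ξ := mem_ball_zero_iff.1 hwb
        have hne : (0:ℝ) < 1 - E*β^m := by linarith
        set t : ℝ := ‖w‖/(1 - E*β^m) with htdef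
        have ht0 : 0 ≤ t := by positivity
        have htlt : t < (1 - 2*E*S m)*ξ := by
          rw [htdef, div_lt_iff₀ hne]
          have hkey : (1 - 2*E*S (m+1)) ≤ (1 - 2*E*S m)*(1 - E*β^m) := by
            rw [hSsucc m]
            nlinarith [hεm0, mul_nonneg (mul_nonneg hE0.le (hS0 m)) hεm0]
          nlinarith [hξ0, hwn, mul_le_mul_of_nonneg_right hkey hξ0.le]
        have hsubt : closedBall (0 : EuclideanSpace ℝ (Fin d)) t ⊆ closedBall 0 (2*ξ) := by
          apply closedBall_subset_closedBall
          have h9 : 0 ≤ (2*E*S m)*ξ :=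
            mul_nonneg (mul_nonneg (by positivity) (hS0 m)) hξ0.le
          linarith [htlt]
        have surj := (key m).surjOn_closedBall_of_nonlinearRightInverse
          ((ContinuousLinearEquiv.refl ℝ (EuclideanSpace ℝ (Fin d))).toNonlinearRightInverse)
          ht0 hsubt
        have hnn : ((((ContinuousLinearEquiv.refl ℝ
            (EuclideanSpace ℝ (Fin d))).toNonlinearRightInverse).nnnorm) : ℝ) = 1 := by
          show (‖(((ContinuousLinearEquiv.refl ℝ (EuclideanSpace ℝ (Fin d))).symm :
            EuclideanSpace ℝ (Fin d) ≃L[ℝ] EuclideanSpace ℝ (Fin d)) :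
            EuclideanSpace ℝ (Fin d) →L[ℝ] EuclideanSpace ℝ (Fin d))‖₊ : ℝ) = 1
          rw [ContinuousLinearEquiv.refl_symm, ContinuousLinearEquiv.coe_refl]
          simp [ContinuousLinearMap.norm_id]
        have hc : ((E*β^m).toNNReal : ℝ) = E*β^m := Real.coe_toNNReal _ hεm0
        have hrad : (((((ContinuousLinearEquiv.refl ℝ
            (EuclideanSpace ℝ (Fin d))).toNonlinearRightInverse).nnnorm : ℝ))⁻¹ -
            ((E*β^m).toNNReal : ℝ)) * t = ‖w‖ := by
          rw [hnn, hc, inv_one, htdef]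
          field_simp
        have hcenter : (fun y => (Lcomp A (m+1)).symm (f (m+1) ((Lcomp A m) y)))
            (0 : EuclideanSpace ℝ (Fin d)) = 0 := hg0 m
        have hw'' : w ∈ closedBall
            ((fun y => (Lcomp A (m+1)).symm (f (m+1) ((Lcomp A m) y)))
              (0 : EuclideanSpace ℝ (Fin d)))
            ((((((ContinuousLinearEquiv.refl ℝ
              (EuclideanSpace ℝ (Fin d))).toNonlinearRightInverse).nnnorm : ℝ))⁻¹ -
              ((E*β^m).toNNReal : ℝ)) * t) := by
          rw [hcenter, hrad, mem_closedBall_zero_iff]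
        obtain ⟨y, hyt, hgy⟩ := surj hw''
        have hgy' : (Lcomp A (m+1)).symm (f (m+1) ((Lcomp A m) y)) = w := hgy
        have hyb : y ∈ ball (0 : EuclideanSpace ℝ (Fin d)) ((1 - 2*E*S m)*ξ) :=
          mem_ball_zero_iff.2 (lt_of_le_of_lt (mem_closedBall_zero_iff.1 hyt) htlt)
        obtain ⟨x, hxb, hfx⟩ := ih.1 ⟨y, hyb, rfl⟩
        refine ⟨x, hxb, ?_⟩
        rw [comps_succ, hfx, ← hgy', ContinuousLinearEquiv.apply_symm_apply]
      · -- upper inclusion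
        rintro z ⟨x, hxb, rfl⟩
        obtain ⟨y, hyb, hLy⟩ := ih.2 ⟨x, hxb, rfl⟩
        have hyn : ‖y‖ < (1 + 2*E*S m)*ξ := mem_ball_zero_iff.1 hyb
        have hy2 : y ∈ closedBall (0 : EuclideanSpace ℝ (Fin d)) (2*ξ) := by
          rw [mem_closedBall_zero_iff]
          nlinarith [hξ0]
        have happ := key m y hy2 0 (mem_closedBall_self (by positivity))
        have h' : ‖(Lcomp A (m+1)).symm (f (m+1) ((Lcomp A m) y)) - y‖ ≤
            (E*β^m) * ‖y‖ := by
          have hb : ‖(Lcomp A (m+1)).symm (f (m+1) ((Lcomp A m) y)) -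
              (Lcomp A (m+1)).symm (f (m+1) ((Lcomp A m) 0)) - (y - 0)‖ ≤
              ((E*β^m).toNNReal : ℝ) * ‖y - 0‖ := happ
          rw [hg0 m, Real.coe_toNNReal _ (by positivity : (0:ℝ) ≤ E*β^m)] at hb
          simpa using hb
        have hnorm : ‖(Lcomp A (m+1)).symm (f (m+1) ((Lcomp A m) y))‖ <
            (1 + 2*E*S (m+1)) * ξ := by
          have htri : ‖(Lcomp A (m+1)).symm (f (m+1) ((Lcomp A m) y))‖ ≤
              ‖(Lcomp A (m+1)).symm (f (m+1) ((Lcomp A m) y)) - y‖ + ‖y‖ :=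
            by simpa using norm_add_le ((Lcomp A (m+1)).symm (f (m+1) ((Lcomp A m) y)) - y) y
          rw [hSsucc m]
          nlinarith [norm_nonneg y, hξ0, h', htri,
            mul_lt_mul_of_pos_left hyn (show (0:ℝ) < 1+E*β^m by linarith),
            mul_le_mul_of_nonneg_right (mul_le_mul_of_nonneg_left (hDS m) hεm0) hξ0.le]
        refine ⟨(Lcomp A (m+1)).symm (f (m+1) ((Lcomp A m) y)),
          mem_ball_zero_iff.2 hnorm, ?_⟩
        rw [ContinuousLinearEquiv.apply_symm_apply, hLy]
        rfl
  -- conclude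
  constructor
  · refine subset_trans (Set.image_mono (ball_subset_ball ?_)) (main n).1
    have h1' : 2*E*S n ≤ 2*E/(1-β) := by
      calc 2*E*S n ≤ 2*E*(1/(1-β)) :=
            mul_le_mul_of_nonneg_left (hSle n) (by positivity)
        _ = 2*E/(1-β) := by ring
    apply mul_le_mul_of_nonneg_right _ hξ0.le
    linarith
  · refine subset_trans (main n).2 (Set.image_mono (ball_subset_ball ?_))
    have h1' : 2*E*S n ≤ 2*E/(1-β) := by
      calc 2*E*S n ≤ 2*E*(1/(1-β)) :=
            mul_le_mul_of_nonneg_left (hSle n) (by positivity)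
        _ = 2*E/(1-β) := by ring
    apply mul_le_mul_of_nonneg_right _ hξ0.le
    linarith


end
end

section
/- Let N ≥ 7 and δ > 0 sufficiently small, and define affine self-maps of ℝ² = ℝ × ℝ: G_{j,1}(s,t) = (N s, N t − (j−1)) and G_{j,2}(s,t) = (N s, N t − (N−j)) for j = 1,2,3, and F₁(s,t) = (s/2, t), F₂(s,t) = (s/2, t + s/2). Let W₁ be the interior of the convex hull of the four points (1, 2/(N−1) − 1 + δ), (1, (N−3)/(N−1) − δ), (2N+1, (N−3)/(N−1) − 2δ), (2N+1, 2/(N−1) − (2N+1) + 2δ). Then for each j ∈ {1,2,3}, the closure of W₁ is contained in F₁⁻¹(W₁) ∪ F₂⁻¹(W₁) ∪ G_{j,1}⁻¹(W₁) ∪ G_{j,2}⁻¹(W₁). -/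
open Set

noncomputable section

/-- `F₁(s,t) = (s/2, t)`. -/
def F1 : ℝ × ℝ → ℝ × ℝ := fun p => (p.1 / 2, p.2)

/-- `F₂(s,t) = (s/2, t + s/2)`. -/
def F2 : ℝ × ℝ → ℝ × ℝ := fun p => (p.1 / 2, p.2 + p.1 / 2)

/-- `G_{j,1}(s,t) = (N s, N t − (j−1))` and `G_{j,2}(s,t) = (N s, N t − (N−j))` for
`j = 1, 2, 3` (here `j : Fin 3` stands for `j − 1 ∈ {0,1,2}`). -/
def Gmap (N : ℕ) (j : Fin 3) : Fin 2 → ℝ × ℝ → ℝ × ℝ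
  | 0 => fun p => ((N : ℝ) * p.1, (N : ℝ) * p.2 - ((j : ℕ) : ℝ))
  | 1 => fun p => ((N : ℝ) * p.1, (N : ℝ) * p.2 - ((N : ℝ) - (((j : ℕ) : ℝ) + 1)))

/-- The open region `W₁`: interior of the convex hull of the four points
`(a, 2/(N−1) − a + δ)`, `(a, (N−3)/(N−1) − δ)`, `(b, (N−3)/(N−1) − 2δ)`,
`(b, 2/(N−1) − b + 2δ)` with `a = 1`, `b = 2N+1`. -/
def W1 (N : ℕ) (δ : ℝ) : Set (ℝ × ℝ) :=
  interior (convexHull ℝ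
    {((1 : ℝ), 2 / ((N : ℝ) - 1) - 1 + δ),
     ((1 : ℝ), ((N : ℝ) - 3) / ((N : ℝ) - 1) - δ),
     ((2 * (N : ℝ) + 1), ((N : ℝ) - 3) / ((N : ℝ) - 1) - 2 * δ),
     ((2 * (N : ℝ) + 1), 2 / ((N : ℝ) - 1) - (2 * (N : ℝ) + 1) + 2 * δ)})

/-- The open polytope description of `W₁`. -/
def Pset (n K c d : ℝ) : Set (ℝ × ℝ) :=
  {p | 1 < p.1 ∧ p.1 < 2*n+1 ∧ c + (2*n-1)*d < p.2 + p.1 - d*p.1 ∧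
       p.2 + d*p.1 < K - (2*n-1)*d}

/-- The closed polytope description of the closure of `W₁`. -/
def Qset (n K c d : ℝ) : Set (ℝ × ℝ) :=
  {p | 1 ≤ p.1 ∧ p.1 ≤ 2*n+1 ∧ c + (2*n-1)*d ≤ p.2 + p.1 - d*p.1 ∧
       p.2 + d*p.1 ≤ K - (2*n-1)*d}

lemma Qset_closed (n K c d : ℝ) : IsClosed (Qset n K c d) := by
  have h : Qset n K c d = ({p : ℝ×ℝ | 1 ≤ p.1} ∩ {p | p.1 ≤ 2*n+1}) ∩
      ({p | c + (2*n-1)*d ≤ p.2 + p.1 - d*p.1} ∩ {p | p.2 + d*p.1 ≤ K - (2*n-1)*d}) := by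
    ext p; simp only [Qset, mem_setOf_eq, mem_inter_iff]; tauto
  rw [h]
  exact (((isClosed_le (by fun_prop) (by fun_prop)).inter
    (isClosed_le (by fun_prop) (by fun_prop))).inter
    ((isClosed_le (by fun_prop) (by fun_prop)).inter
    (isClosed_le (by fun_prop) (by fun_prop))))

lemma Pset_open (n K c d : ℝ) : IsOpen (Pset n K c d) := by
  have h : Pset n K c d = ({p : ℝ×ℝ | 1 < p.1} ∩ {p | p.1 < 2*n+1}) ∩
      ({p | c + (2*n-1)*d < p.2 + p.1 - d*p.1} ∩ {p | p.2 + d*p.1 < K - (2*n-1)*d}) := by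
    ext p; simp only [Pset, mem_setOf_eq, mem_inter_iff]; tauto
  rw [h]
  exact (((isOpen_lt (by fun_prop) (by fun_prop)).inter
    (isOpen_lt (by fun_prop) (by fun_prop))).inter
    ((isOpen_lt (by fun_prop) (by fun_prop)).inter
    (isOpen_lt (by fun_prop) (by fun_prop))))

lemma Qset_convex (n K c d : ℝ) : Convex ℝ (Qset n K c d) := by
  have h : Qset n K c d = ({p : ℝ×ℝ | 1 ≤ p.1} ∩ {p | p.1 ≤ 2*n+1}) ∩
      ({p | c + (2*n-1)*d ≤ p.2 + p.1 - d*p.1} ∩ {p | p.2 + d*p.1 ≤ K - (2*n-1)*d}) := by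
    ext p; simp only [Qset, mem_setOf_eq, mem_inter_iff]; tauto
  rw [h]
  exact (((convex_halfSpace_ge ⟨fun _ _ => rfl, fun _ _ => rfl⟩ 1).inter
      (convex_halfSpace_le ⟨fun _ _ => rfl, fun _ _ => rfl⟩ _)).inter
    ((convex_halfSpace_ge ⟨by intro x y; simp; ring, by intro m x; simp; ring⟩ _).inter
      (convex_halfSpace_le ⟨by intro x y; simp; ring, by intro m x; simp; ring⟩ _)))

section Main

variable {n δ d K c : ℝ} (hn : 7 ≤ n) (hδ0 : 0 < δ) (hδ : δ ≤ 1/100)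
  (hd : d * (2*n) = δ) (hK : K * (n-1) = n-3) (hc : c * (n-1) = 2)

include hn hδ0 hδ hd hK hc

lemma basic_facts : 0 < d ∧ d ≤ δ ∧ (2*n-1)*d ≤ δ ∧ 1/3 ≤ K - c ∧ 0 < c ∧ K ≤ 1 := by
  have hn1 : (6:ℝ) ≤ n - 1 := by linarith
  have hd0 : 0 < d := by nlinarith
  have hdδ : d ≤ δ := by nlinarith
  have h2nd : (2*n-1)*d ≤ δ := by nlinarith
  have hKc : (K - c) * (n-1) = n - 5 := by linear_combination hK - hc
  have hKc' : 1/3 ≤ K - c := by nlinarith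
  have hc0 : 0 < c := by nlinarith
  have hK1 : K ≤ 1 := by nlinarith
  exact ⟨hd0, hdδ, h2nd, hKc', hc0, hK1⟩

/-- The four vertices lie in the closed polytope. -/
lemma verts_mem :
    ((1 : ℝ), c - 1 + δ) ∈ Qset n K c d ∧ ((1:ℝ), K - δ) ∈ Qset n K c d ∧
    ((2*n+1 : ℝ), K - 2*δ) ∈ Qset n K c d ∧ ((2*n+1 : ℝ), c - (2*n+1) + 2*δ) ∈ Qset n K c d := by
  obtain ⟨hd0, hdδ, h2nd, hKc', hc0, hK1⟩ := basic_facts hn hδ0 hδ hd hK hc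
  refine ⟨⟨le_refl 1, by dsimp only; linarith, by dsimp only; nlinarith, by dsimp only; nlinarith⟩,
    ⟨le_refl 1, by dsimp only; linarith, by dsimp only; nlinarith, by dsimp only; nlinarith⟩,
    ⟨by dsimp only; linarith, le_refl _, by dsimp only; nlinarith, by dsimp only; nlinarith⟩,
    ⟨by dsimp only; linarith, le_refl _, by dsimp only; nlinarith, by dsimp only; nlinarith⟩⟩

/-- Main case analysis: every point of the closed polytope is mapped into the open
polytope by one of the four maps. -/
lemma cover_aux (s t j' : ℝ) (hj0 : 0 ≤ j') (hj2 : j' ≤ 2)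
    (hq : ((s, t) : ℝ×ℝ) ∈ Qset n K c d) :
    ((s/2, t) : ℝ×ℝ) ∈ Pset n K c d ∨ ((s/2, t + s/2) : ℝ×ℝ) ∈ Pset n K c d ∨
    ((n*s, n*t - j') : ℝ×ℝ) ∈ Pset n K c d ∨
    ((n*s, n*t - (n - (j'+1))) : ℝ×ℝ) ∈ Pset n K c d := by
  obtain ⟨hd0, hdδ, h2nd, hKc', hc0, hK1⟩ := basic_facts hn hδ0 hδ hd hK hc
  have h1 : 1 ≤ s := hq.1
  have h2 : s ≤ 2*n+1 := hq.2.1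
  have h3 : c + (2*n-1)*d ≤ t + s - d*s := hq.2.2.1
  have h4 : t + d*s ≤ K - (2*n-1)*d := hq.2.2.2
  simp only [Pset, mem_setOf_eq]
  by_cases hs : 2 < s
  · -- use F1 or F2
    by_cases hF : c + (2*n-1)*d < t + s/2 - d*(s/2)
    · left
      exact ⟨by linarith, by linarith, hF, by nlinarith⟩
    · right; left
      push_neg at hF
      have hds : d*s ≤ 2*δ := by nlinarith
      exact ⟨by linarith, by linarith, by nlinarith, by nlinarith⟩
  · -- s ≤ 2 : use the G maps
    push_neg at hs
    have hns1 : 1 < n*s := by nlinarith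
    have hns2 : n*s < 2*n+1 := by nlinarith
    have hdns : d*(n*s) ≤ δ := by nlinarith
    have hpos : 0 < (n-1)*((2*n-1)*d) :=
      mul_pos (show (0:ℝ) < n-1 by linarith) (mul_pos (show (0:ℝ) < 2*n-1 by linarith) hd0)
    by_cases hG : (n*t - j') + d*(n*s) < K - (2*n-1)*d
    · right; right; left
      refine ⟨hns1, hns2, ?_, hG⟩
      have h3n : n*c + n*((2*n-1)*d) ≤ n*t + n*s - d*(n*s) := by
        have := mul_le_mul_of_nonneg_left h3 (show (0:ℝ) ≤ n by linarith)
        ring_nf at this ⊢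
        linarith
      linarith [h3n, hc, hj2, hpos]
    · right; right; right
      push_neg at hG
      refine ⟨hns1, hns2, ?_, ?_⟩
      · have hnns : n ≤ n*s := by nlinarith
        linarith [hG, hKc', hj0, hdns, h2nd, hδ, hnns]
      · have h4n : n*t + d*(n*s) ≤ n*K - n*((2*n-1)*d) := by
          have := mul_le_mul_of_nonneg_left h4 (show (0:ℝ) ≤ n by linarith)
          ring_nf at this ⊢
          linarith
        linarith [h4n, hK, hj2, hpos]

/-- The open polytope is contained in the convex hull of the four vertices. -/
lemma P_subset_hull :
    Pset n K c d ⊆ convexHull ℝ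
      {((1 : ℝ), c - 1 + δ), ((1:ℝ), K - δ), ((2*n+1 : ℝ), K - 2*δ),
       ((2*n+1 : ℝ), c - (2*n+1) + 2*δ)} := by
  obtain ⟨hd0, hdδ, h2nd, hKc', hc0, hK1⟩ := basic_facts hn hδ0 hδ hd hK hc
  rintro ⟨s, t⟩ hp
  have h1 : 1 < s := hp.1
  have h2 : s < 2*n+1 := hp.2.1
  have h3 : c + (2*n-1)*d < t + s - d*s := hp.2.2.1
  have h4 : t + d*s < K - (2*n-1)*d := hp.2.2.2
  clear hp
  set S : Set (ℝ×ℝ) := {((1 : ℝ), c - 1 + δ), ((1:ℝ), K - δ), ((2*n+1 : ℝ), K - 2*δ),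
       ((2*n+1 : ℝ), c - (2*n+1) + 2*δ)} with hS
  have hA : ((1 : ℝ), c - 1 + δ) ∈ convexHull ℝ S := subset_convexHull ℝ S (by simp [hS])
  have hB : ((1 : ℝ), K - δ) ∈ convexHull ℝ S := subset_convexHull ℝ S (by simp [hS])
  have hC : ((2*n+1 : ℝ), K - 2*δ) ∈ convexHull ℝ S := subset_convexHull ℝ S (by simp [hS])
  have hD : ((2*n+1 : ℝ), c - (2*n+1) + 2*δ) ∈ convexHull ℝ S :=
    subset_convexHull ℝ S (by simp [hS])
  have hn0 : (0:ℝ) < 2*n := by linarith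
  set l : ℝ := (s - 1)/(2*n) with hl
  have hl0 : 0 ≤ l := div_nonneg (by linarith) (by linarith)
  have hl1 : l ≤ 1 := by rw [hl, div_le_one hn0]; linarith
  set Bo : ℝ×ℝ := (1-l) • ((1 : ℝ), c - 1 + δ) + l • ((2*n+1 : ℝ), c - (2*n+1) + 2*δ) with hBo
  set To : ℝ×ℝ := (1-l) • ((1 : ℝ), K - δ) + l • ((2*n+1 : ℝ), K - 2*δ) with hTo
  have hBomem : Bo ∈ convexHull ℝ S := (convex_convexHull ℝ S) hA hD (by linarith) hl0 (by ring)
  have hTomem : To ∈ convexHull ℝ S := (convex_convexHull ℝ S) hB hC (by linarith) hl0 (by ring)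
  have hBo1 : Bo.1 = s := by
    simp only [hBo, Prod.smul_mk, Prod.mk_add_mk, smul_eq_mul, hl]
    field_simp
    ring
  have hTo1 : To.1 = s := by
    simp only [hTo, Prod.smul_mk, Prod.mk_add_mk, smul_eq_mul, hl]
    field_simp
    ring
  have hBo2 : Bo.2 = c - s + (2*n-1)*d + d*s := by
    simp only [hBo, Prod.smul_mk, Prod.mk_add_mk, smul_eq_mul, hl]
    rw [← hd]
    field_simp
    ring
  have hTo2 : To.2 = K - (2*n-1)*d - d*s := by
    simp only [hTo, Prod.smul_mk, Prod.mk_add_mk, smul_eq_mul, hl]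
    rw [← hd]
    field_simp
    ring
  have hbt : Bo.2 < t := by rw [hBo2]; linarith
  have htt : t < To.2 := by rw [hTo2]; linarith
  have hg : 0 < To.2 - Bo.2 := by linarith
  set μ : ℝ := (t - Bo.2)/(To.2 - Bo.2) with hμ
  have hμ0 : 0 ≤ μ := div_nonneg (by linarith) (le_of_lt hg)
  have hμ1 : μ ≤ 1 := by rw [hμ, div_le_one hg]; linarith
  have key : ((s, t) : ℝ×ℝ) = (1-μ) • Bo + μ • To := by
    rw [Prod.ext_iff]
    constructor
    · simp only [Prod.fst_add, Prod.smul_fst, smul_eq_mul, hBo1, hTo1]; ring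
    · have hne : To.2 - Bo.2 ≠ 0 := ne_of_gt hg
      simp only [Prod.snd_add, Prod.smul_snd, smul_eq_mul, hμ]
      field_simp
      ring
  rw [key]
  exact (convex_convexHull ℝ S) hBomem hTomem (by linarith) hμ0 (by ring)

end Main

/-- **Covering condition for `W₁`** (Proposition 6.2): for `N ≥ 7` and all sufficiently
small `δ > 0`, for each `j ∈ {1,2,3}` the closure of `W₁` is contained in
`F₁⁻¹(W₁) ∪ F₂⁻¹(W₁) ∪ G_{j,1}⁻¹(W₁) ∪ G_{j,2}⁻¹(W₁)`. -/
theorem W1_covering (N : ℕ) (hN : 7 ≤ N) :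
    ∃ δ₀ > (0 : ℝ), ∀ δ : ℝ, 0 < δ → δ ≤ δ₀ → ∀ j : Fin 3,
      closure (W1 N δ) ⊆
        F1 ⁻¹' (W1 N δ) ∪ F2 ⁻¹' (W1 N δ) ∪
          (Gmap N j 0) ⁻¹' (W1 N δ) ∪ (Gmap N j 1) ⁻¹' (W1 N δ) := by
  refine ⟨1/100, by norm_num, ?_⟩
  intro δ hδ0 hδ j
  have hn : (7:ℝ) ≤ (N:ℝ) := by exact_mod_cast hN
  have hn1 : ((N:ℝ) - 1) ≠ 0 := by intro h; nlinarith
  have h2n : (2*(N:ℝ)) ≠ 0 := by intro h; nlinarith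
  have hK : ((N:ℝ)-3)/((N:ℝ)-1) * ((N:ℝ)-1) = (N:ℝ)-3 := div_mul_cancel₀ _ hn1
  have hc : 2/((N:ℝ)-1) * ((N:ℝ)-1) = 2 := div_mul_cancel₀ _ hn1
  have hd : δ/(2*(N:ℝ)) * (2*(N:ℝ)) = δ := div_mul_cancel₀ _ h2n
  obtain ⟨hA, hB, hC, hD⟩ := verts_mem hn hδ0 hδ hd hK hc
  have hhullQ : convexHull ℝ
      {((1 : ℝ), 2 / ((N : ℝ) - 1) - 1 + δ),
       ((1 : ℝ), ((N : ℝ) - 3) / ((N : ℝ) - 1) - δ),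
       ((2 * (N : ℝ) + 1), ((N : ℝ) - 3) / ((N : ℝ) - 1) - 2 * δ),
       ((2 * (N : ℝ) + 1), 2 / ((N : ℝ) - 1) - (2 * (N : ℝ) + 1) + 2 * δ)} ⊆
      Qset (N:ℝ) (((N:ℝ)-3)/((N:ℝ)-1)) (2/((N:ℝ)-1)) (δ/(2*(N:ℝ))) := by
    apply convexHull_min _ (Qset_convex _ _ _ _)
    intro x hx
    simp only [mem_insert_iff, mem_singleton_iff] at hx
    rcases hx with rfl | rfl | rfl | rfl
    · exact hA
    · exact hB
    · exact hC
    · exact hD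
  have hclo : closure (W1 N δ) ⊆
      Qset (N:ℝ) (((N:ℝ)-3)/((N:ℝ)-1)) (2/((N:ℝ)-1)) (δ/(2*(N:ℝ))) := by
    rw [W1]
    exact closure_minimal (interior_subset.trans hhullQ) (Qset_closed _ _ _ _)
  have hPW : Pset (N:ℝ) (((N:ℝ)-3)/((N:ℝ)-1)) (2/((N:ℝ)-1)) (δ/(2*(N:ℝ))) ⊆ W1 N δ := by
    rw [W1]
    exact interior_maximal (P_subset_hull hn hδ0 hδ hd hK hc) (Pset_open _ _ _ _)
  intro p hp
  have hq : ((p.1, p.2) : ℝ×ℝ) ∈ Qset (N:ℝ) (((N:ℝ)-3)/((N:ℝ)-1)) (2/((N:ℝ)-1)) (δ/(2*(N:ℝ))) := hclo hp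
  have hj0 : (0:ℝ) ≤ ((j:ℕ):ℝ) := by positivity
  have hj2 : ((j:ℕ):ℝ) ≤ 2 := by
    have := j.isLt
    have : (j:ℕ) ≤ 2 := by omega
    exact_mod_cast this
  obtain c1 | c2 | c3 | c4 := cover_aux hn hδ0 hδ hd hK hc p.1 p.2 ((j:ℕ):ℝ) hj0 hj2 hq
  · exact Or.inl (Or.inl (Or.inl (hPW c1)))
  · exact Or.inl (Or.inl (Or.inr (hPW c2)))
  · exact Or.inl (Or.inr (hPW c3))
  · exact Or.inr (hPW c4)

end
end

section
/- Suppose W₁ ⊆ ℝ* × ℝ is an open bounded set in the one-dimensional affine group Aff(1,ℝ) ≅ ℝ × ℝ* that satisfies the strong covering condition with respect to a family consisting of contracting operators {F_i}_{i∈I} and expanding operators {G_k}_{k∈J}, all of the form (s,t) ↦ (λ s, λ t + c) for various λ, c (i.e., acting diagonally on the scale coordinate). Define W_d := {(s,t₁,…,t_d) : (s,t_i) ∈ W₁ for all i} ⊆ ℝ^d ⋊ ℝ*. Assume additionally that for every s in the projection of closure(W₁) to the first coordinate, the vertical segment {(s,t) ∈ closure(W₁)} is sent into W₁ either entirely by contracting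 operators (for each point some F_i works) or entirely by expanding operators (for each point each of at least n expanding operators works). Then every point of closure(W_d) is mapped into W_d by a product operator Ψ₁ × ⋯ × Ψ_d where either all Ψ_i are contracting or all are expanding; in the latter case at least n^d distinct such expanding product operators work. -/
open Metric Set

/-- **Expanding `n^d`-cover of the fiber product `W_d`** (Lemma 6.4): suppose `W₁` is an
open bounded subset of `Aff(1,ℝ) ≅ ℝ × ℝ*` satisfying the strong covering condition with
respect to contracting operators `(s,t) ↦ (λ_F s, λ_F t + c_F i)` and expanding operators
`(s,t) ↦ (λ_G s, λ_G t + c_G k)`, and that every vertical segment of `closure W₁` is sent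
into `W₁` either entirely by contracting operators (at each point some `F i` works) or
entirely by expanding operators (at each point at least `n` of the `G k` work). Then
every point of the closure of the fiber product
`W_d = {(s,t₁,…,t_d) : (s,t_i) ∈ W₁ ∀ i}` is mapped into `W_d` by a product operator
`Ψ₁ × ⋯ × Ψ_d` with all factors contracting or all expanding; in the expanding case at
least `n^d` distinct product operators work. -/
theorem expanding_cover_of_fiber_product {d : ℕ} {I J : Type*} [Fintype I] [Fintype J]
    (W1 : Set (ℝ × ℝ)) (hW1o : IsOpen W1) (hW1b : Bornology.IsBounded W1)
    (lF lG : ℝ) (cF : I → ℝ) (cG : J → ℝ)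
    (hlF : |lF| < 1) (hlG : 1 < |lG|)
    (n : ℕ)
    (hsc : ∃ δ > (0 : ℝ), (⋃ p ∈ W1, ball p δ) ⊆
      (⋃ i : I, (fun p : ℝ × ℝ => (lF * p.1, lF * p.2 + cF i)) ⁻¹'
        {q ∈ W1 | ball q δ ⊆ W1}) ∪
      (⋃ k : J, (fun p : ℝ × ℝ => (lG * p.1, lG * p.2 + cG k)) ⁻¹'
        {q ∈ W1 | ball q δ ⊆ W1}))
    (hdich : ∀ s : ℝ, (∃ t, (s, t) ∈ closure W1) →
      (∀ t, (s, t) ∈ closure W1 → ∃ i : I, (lF * s, lF * t + cF i) ∈ W1) ∨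
      (∀ t, (s, t) ∈ closure W1 → ∃ S : Finset J, n ≤ S.card ∧
        ∀ k ∈ S, (lG * s, lG * t + cG k) ∈ W1)) :
    ∀ p : ℝ × (Fin d → ℝ),
      p ∈ closure {q : ℝ × (Fin d → ℝ) | ∀ i, (q.1, q.2 i) ∈ W1} →
      (∃ σ : Fin d → I, ∀ i, (lF * p.1, lF * p.2 i + cF (σ i)) ∈ W1) ∨
      (∃ S : Finset (Fin d → J), n ^ d ≤ S.card ∧
        ∀ σ ∈ S, ∀ i, (lG * p.1, lG * p.2 i + cG (σ i)) ∈ W1) := by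
  intro p hp
  have hcl : ∀ i : Fin d, (p.1, p.2 i) ∈ closure W1 := by
    intro i
    have hc : Continuous fun q : ℝ × (Fin d → ℝ) => (q.1, q.2 i) :=
      (continuous_fst).prodMk ((continuous_apply i).comp continuous_snd)
    have hsub : {q : ℝ × (Fin d → ℝ) | ∀ i, (q.1, q.2 i) ∈ W1} ⊆
        (fun q : ℝ × (Fin d → ℝ) => (q.1, q.2 i)) ⁻¹' W1 := fun q hq => hq i
    exact hc.closure_preimage_subset W1 (closure_mono hsub hp)
  rcases Nat.eq_zero_or_pos d with hd | hd
  · subst hd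
    exact Or.inl ⟨Fin.elim0, fun i => i.elim0⟩
  · have h0 : ∃ t, (p.1, t) ∈ closure W1 := ⟨p.2 ⟨0, hd⟩, hcl ⟨0, hd⟩⟩
    rcases hdich p.1 h0 with hF | hG
    · left
      choose σ hσ using fun i => hF (p.2 i) (hcl i)
      exact ⟨σ, hσ⟩
    · right
      choose S hScard hS using fun i => hG (p.2 i) (hcl i)
      refine ⟨Fintype.piFinset S, ?_, ?_⟩
      · rw [Fintype.card_piFinset]
        calc n ^ d = ∏ _i : Fin d, n := by simp
          _ ≤ ∏ i, (S i).card := Finset.prod_le_prod (fun _ _ => Nat.zero_le _)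
              (fun i _ => hScard i)
      · intro σ hσ i
        exact hS i (σ i) ((Fintype.mem_piFinset).mp hσ i)
end
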